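/- arXiv:2403.14768 — 3 statements merged into one kernel-verified Lean document; each statement's English description precedes it below -/
import Mathlib

section
/- For every U > 0 and every t_z ≥ 0 there exists a unique T > 0 satisfying 1 = ∫_{[−π,π]³} U·tanh(ε(k)/(2T))/(2ε(k)) · dk/(2π)³; denoting this solution by T_N(U,t_z), one moreover has T_N(U,t_z) → 0 as U ↓ 0 uniformly in t_z, i.e. for every δ > 0 there exists U₀ > 0 such that T_N(U,t_z) < δ for all 0 < U < U₀ and all t_z ≥ 0. -/
open Real MeasureTheory Set

noncomputable section

/-- The two-dimensional density of states `N₀(ε)`, extended evenly to `(-4,4)`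
and by `0` outside. -/
def N0 (ε : ℝ) : ℝ :=
  if |ε| < 4 then
    (Real.pi ^ 2)⁻¹ * ∫ u in (-2:ℝ)..(2 - |ε|),
      (Real.sqrt (4 - u ^ 2) * Real.sqrt (4 - (u + |ε|) ^ 2))⁻¹
  else 0

/-- The three-dimensional density of states `N_{t_z}(ε)`. -/
def N3 (tz ε : ℝ) : ℝ :=
  Real.pi⁻¹ * ∫ u in (-2:ℝ)..2, N0 (tz * u + ε) / Real.sqrt (4 - u ^ 2)

/-- `tanh (x / y)` with the convention that it equals `1` when `y = 0`. -/
def thQ (x y : ℝ) : ℝ := if y = 0 then 1 else Real.tanh (x / y)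

/-- The tight-binding band relation of the anisotropic 3D model. -/
def bandE (tz k₁ k₂ k₃ : ℝ) : ℝ :=
  -2 * (Real.cos k₁ + Real.cos k₂) - 2 * tz * Real.cos k₃

/-- The integrand of the Néel-temperature equation, interpreted as `U/(4T)` where the band
relation vanishes. -/
def neelIntegrand (U tz T k₁ k₂ k₃ : ℝ) : ℝ :=
  if bandE tz k₁ k₂ k₃ = 0 then U / (4 * T)
  else U * Real.tanh (bandE tz k₁ k₂ k₃ / (2 * T)) / (2 * bandE tz k₁ k₂ k₃)

/-- The equation characterizing the Néel temperature of the anisotropic 3D model. -/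
def neelEq (U tz T : ℝ) : Prop :=
  1 = (∫ k₁ in (-Real.pi)..Real.pi, ∫ k₂ in (-Real.pi)..Real.pi,
        ∫ k₃ in (-Real.pi)..Real.pi, neelIntegrand U tz T k₁ k₂ k₃) / (2 * Real.pi) ^ 3

/-- The antiferromagnetic mean-field (gap) equation of the anisotropic 3D model. -/
def gapEq (U tz T Δ : ℝ) : Prop :=
  1 = (∫ k₁ in (-Real.pi)..Real.pi, ∫ k₂ in (-Real.pi)..Real.pi,
        ∫ k₃ in (-Real.pi)..Real.pi,
          U * thQ (Real.sqrt (Δ ^ 2 + bandE tz k₁ k₂ k₃ ^ 2)) (2 * T)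
            / (2 * Real.sqrt (Δ ^ 2 + bandE tz k₁ k₂ k₃ ^ 2))) / (2 * Real.pi) ^ 3

/-- The 2D band relation. -/
def bandE2 (k₁ k₂ : ℝ) : ℝ := -2 * (Real.cos k₁ + Real.cos k₂)

/-- The equation characterizing the 2D Néel temperature. -/
def neelEq2 (U T : ℝ) : Prop :=
  1 = (∫ k₁ in (-Real.pi)..Real.pi, ∫ k₂ in (-Real.pi)..Real.pi,
        (if bandE2 k₁ k₂ = 0 then U / (4 * T)
         else U * Real.tanh (bandE2 k₁ k₂ / (2 * T)) / (2 * bandE2 k₁ k₂))) / (2 * Real.pi) ^ 2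

/-- The 2D antiferromagnetic mean-field (gap) equation. -/
def gapEq2 (U T Δ : ℝ) : Prop :=
  1 = (∫ k₁ in (-Real.pi)..Real.pi, ∫ k₂ in (-Real.pi)..Real.pi,
        U * thQ (Real.sqrt (Δ ^ 2 + bandE2 k₁ k₂ ^ 2)) (2 * T)
          / (2 * Real.sqrt (Δ ^ 2 + bandE2 k₁ k₂ ^ 2))) / (2 * Real.pi) ^ 2

/-- The BCS-type function `J(x,y)`. -/
def Jfun (x y : ℝ) : ℝ :=
  ∫ ε in Set.Ioi (0:ℝ),
    (thQ (Real.sqrt (x ^ 2 + ε ^ 2)) (2 * y) / Real.sqrt (x ^ 2 + ε ^ 2)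
      - Real.tanh (ε / 2) / ε)

/-- `f` is the BCS gap-ratio function: for every `y ∈ [0,1)`, `f y` is the unique positive
solution `x` of `J(x,y) = 0`. -/
def IsBCS (f : ℝ → ℝ) : Prop :=
  ∀ y ∈ Set.Ico (0:ℝ) 1,
    0 < f y ∧ Jfun (f y) y = 0 ∧ ∀ x, 0 < x → Jfun x y = 0 → x = f y

-- ===== auxiliary development =====

lemma tanh_eq_fun : Real.tanh = fun x => Real.sinh x / Real.cosh x :=
  funext fun x => Real.tanh_eq_sinh_div_cosh x

lemma hasDerivAt_tanh (x : ℝ) : HasDerivAt Real.tanh (1 / Real.cosh x ^ 2) x := by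
  have h := (Real.hasDerivAt_sinh x).div (Real.hasDerivAt_cosh x) (Real.cosh_pos x).ne'
  rw [tanh_eq_fun]
  refine h.congr_deriv ?_
  have h2 := Real.cosh_sq_sub_sinh_sq x
  have h3 := (Real.cosh_pos x).ne'
  rw [div_eq_div_iff (pow_ne_zero 2 h3) (pow_ne_zero 2 h3)]
  nlinarith

lemma tanh_strictMono : StrictMono Real.tanh := by
  apply strictMono_of_deriv_pos
  intro x
  rw [(hasDerivAt_tanh x).deriv]
  positivity

lemma tanh_pos {x : ℝ} (hx : 0 < x) : 0 < Real.tanh x := by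
  have := tanh_strictMono hx
  rwa [Real.tanh_zero] at this

lemma tanh_neg' {x : ℝ} (hx : x < 0) : Real.tanh x < 0 := by
  have := tanh_strictMono hx
  rwa [Real.tanh_zero] at this

lemma tanh_le_self {x : ℝ} (hx : 0 ≤ x) : Real.tanh x ≤ x := by
  have hmono : MonotoneOn (fun y => y - Real.tanh y) (Set.Ici (0:ℝ)) := by
    apply monotoneOn_of_deriv_nonneg (convex_Ici 0)
    · have hct : Continuous Real.tanh := by
        rw [tanh_eq_fun]
        exact Real.continuous_sinh.div Real.continuous_cosh fun y => (Real.cosh_pos y).ne'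
      exact (continuous_id.sub hct).continuousOn
    · intro y _
      exact ((hasDerivAt_id y).sub (hasDerivAt_tanh y)).differentiableAt.differentiableWithinAt
    · intro y _
      rw [deriv_fun_sub differentiableAt_fun_id (hasDerivAt_tanh y).differentiableAt,
        (hasDerivAt_tanh y).deriv, deriv_id'']
      have h1 := Real.cosh_sq y
      have h2 := sq_nonneg (Real.sinh y)
      have h3 := (Real.cosh_pos y).le
      have : (1:ℝ) ≤ Real.cosh y ^ 2 := by nlinarith
      rw [sub_nonneg, div_le_one (by nlinarith)]
      linarith
  have := hmono (Set.self_mem_Ici) (Set.mem_Ici.2 hx) hx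
  simpa [Real.tanh_zero] using this

/-- `tanh x / x`, with value `1` at `0`. -/
def phi (x : ℝ) : ℝ := if x = 0 then 1 else Real.tanh x / x

lemma phi_pos (x : ℝ) : 0 < phi x := by
  unfold phi
  rcases lt_trichotomy x 0 with h | h | h
  · rw [if_neg h.ne]
    exact div_pos_of_neg_of_neg (tanh_neg' h) h
  · simp [h]
  · rw [if_neg h.ne']
    exact div_pos (tanh_pos h) h

lemma phi_neg_eq (x : ℝ) : phi (-x) = phi x := by
  unfold phi
  rcases eq_or_ne x 0 with rfl | h
  · simp
  · rw [if_neg (by simpa using h), if_neg h, Real.tanh_neg, neg_div_neg_eq]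

lemma phi_le_one (x : ℝ) : phi x ≤ 1 := by
  have key : ∀ y : ℝ, 0 ≤ y → phi y ≤ 1 := by
    intro y hy
    rcases eq_or_lt_of_le hy with rfl | hy'
    · simp [phi]
    · rw [phi, if_neg hy'.ne', div_le_one hy']
      exact tanh_le_self hy'.le
  rcases le_total 0 x with h | h
  · exact key x h
  · rw [← phi_neg_eq]
    exact key (-x) (by linarith)

lemma continuous_phi : Continuous phi := by
  rw [continuous_iff_continuousAt]
  intro x
  rcases eq_or_ne x 0 with rfl | hx
  · rw [ContinuousAt]
    have h0 : phi 0 = 1 := by simp [phi]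
    rw [h0, ← nhdsNE_sup_pure (0:ℝ), Filter.tendsto_sup]
    constructor
    · have hs := hasDerivAt_iff_tendsto_slope.1 (hasDerivAt_tanh 0)
      simp only [Real.cosh_zero, one_pow, div_one] at hs
      apply hs.congr'
      filter_upwards [self_mem_nhdsWithin] with y hy
      have : y ≠ 0 := hy
      simp [slope, phi, this, Real.tanh_zero, div_eq_mul_inv, mul_comm]
    · have : phi 0 = 1 := h0
      simpa [this] using tendsto_pure_nhds phi 0
  · have hct : Continuous Real.tanh := by
      rw [tanh_eq_fun]
      exact Real.continuous_sinh.div Real.continuous_cosh fun y => (Real.cosh_pos y).ne'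
    have : ContinuousAt (fun y => Real.tanh y / y) x :=
      hct.continuousAt.div continuousAt_id hx
    apply this.congr
    filter_upwards [isOpen_ne.mem_nhds hx] with y hy
    simp [phi, hy]
section helpers

/-- Integral of a continuous, strictly smaller function is strictly smaller. -/
lemma integral_lt_integral_of_lt {f g : ℝ → ℝ} (hf : Continuous f) (hg : Continuous g)
    (h : ∀ x, f x < g x) {a b : ℝ} (hab : a < b) :
    ∫ x in a..b, f x < ∫ x in a..b, g x := by
  have hpos := intervalIntegral.intervalIntegral_pos_of_pos_on (f := fun x => g x - f x)
    ((hg.sub hf).intervalIntegrable a b) (fun x _ => sub_pos.2 (h x)) hab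
  rw [intervalIntegral.integral_sub (hg.intervalIntegrable a b) (hf.intervalIntegrable a b)]
    at hpos
  linarith

/-- For a nonnegative continuous function, the integral over a subinterval is at most the
integral over the interval. -/
lemma integral_subinterval_le {f : ℝ → ℝ} (hf : Continuous f) (h0 : ∀ x, 0 ≤ f x)
    {a b c d : ℝ} (hac : a ≤ c) (hcd : c ≤ d) (hdb : d ≤ b) :
    ∫ x in c..d, f x ≤ ∫ x in a..b, f x := by
  have h1 : (∫ x in a..c, f x) + ∫ x in c..b, f x = ∫ x in a..b, f x :=
    intervalIntegral.integral_add_adjacent_intervals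
      (hf.intervalIntegrable a c : IntervalIntegrable f volume a c)
      (hf.intervalIntegrable c b : IntervalIntegrable f volume c b)
  have h2 : (∫ x in c..d, f x) + ∫ x in d..b, f x = ∫ x in c..b, f x :=
    intervalIntegral.integral_add_adjacent_intervals
      (hf.intervalIntegrable c d : IntervalIntegrable f volume c d)
      (hf.intervalIntegrable d b : IntervalIntegrable f volume d b)
  have h3 : 0 ≤ ∫ x in a..c, f x := intervalIntegral.integral_nonneg hac fun u _ => h0 u
  have h4 : 0 ≤ ∫ x in d..b, f x := intervalIntegral.integral_nonneg hdb fun u _ => h0 u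
  linarith

end helpers

section core

open intervalIntegral

set_option maxHeartbeats 1000000 in
/-- The core logarithmic lower bound near a Fermi-surface crossing. -/
lemma core_bound {T s A : ℝ} (hT : 0 < T) (hs : 0 < s) (hA : |A| ≤ s / 4)
    (hTs : 5 * T ≤ 2 * s) :
    Real.tanh 1 * (T / s) * Real.log (2 * s / (5 * T)) ≤
      ∫ x in (-π)..π, phi (1 / (2 * T) * (-(2 * s) * Real.cos x - A)) := by
  have hs2 : (0:ℝ) < 2 * s := by linarith
  set y : ℝ := -A / (2 * s) with hy_def
  have hyabs : |y| ≤ 1 / 8 := by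
    rw [hy_def, abs_div, abs_neg, abs_of_pos hs2, div_le_iff₀ hs2]
    linarith
  have hylo : -(1/8 : ℝ) ≤ y := (abs_le.1 hyabs).1
  have hyhi : y ≤ (1/8 : ℝ) := (abs_le.1 hyabs).2
  have hy1 : -1 ≤ y := by linarith
  have hy2 : y ≤ 1 := by linarith
  set c : ℝ := Real.arccos y with hc_def
  have hcosc : Real.cos c = y := Real.cos_arccos hy1 hy2
  have hsinc : (124 / 125 : ℝ) ≤ Real.sin c := by
    have hysq : y ^ 2 ≤ 1 / 64 := by
      nlinarith [mul_nonneg (by linarith : (0:ℝ) ≤ 1/8 - y) (by linarith : (0:ℝ) ≤ 1/8 + y)]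
    rw [hc_def, Real.sin_arccos, Real.le_sqrt (by norm_num) (by linarith)]
    linarith
  have hc0 : 0 ≤ c := Real.arccos_nonneg y
  have harc : Real.arcsin (-(1:ℝ)/2) = -(π/6) := by
    rw [show (-(1:ℝ)/2) = Real.sin (-(π/6)) by rw [Real.sin_neg, Real.sin_pi_div_six]; ring]
    exact Real.arcsin_sin (by linarith [Real.pi_pos]) (by linarith [Real.pi_pos])
  have hcle : c + 1/2 ≤ π := by
    have h1 : Real.arcsin (-(1:ℝ)/2) ≤ Real.arcsin y := monotone_arcsin (by linarith)
    rw [harc] at h1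
    have h2 : c = π/2 - Real.arcsin y := by
      rw [hc_def, Real.arccos_eq_pi_div_two_sub_arcsin]
    rw [h2]
    linarith [Real.pi_gt_three]
  have hsin_on : ∀ w ∈ Icc c (c + 1/2), (4/5 : ℝ) ≤ Real.sin w := by
    intro w hw
    have hu1 : 0 ≤ w - c := by linarith [hw.1]
    have hu2 : w - c ≤ 1/2 := by linarith [hw.2]
    have hw_eq : Real.sin w = Real.sin c * Real.cos (w - c) + Real.cos c * Real.sin (w - c) := by
      rw [← Real.sin_add]; ring_nf
    have hcos : (7/8 : ℝ) ≤ Real.cos (w - c) := by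
      have h := Real.one_sub_sq_div_two_le_cos (x := w - c)
      have hsq : (w - c) ^ 2 ≤ 1 / 4 := by nlinarith [mul_le_mul hu2 hu2 hu1 (by norm_num : (0:ℝ) ≤ 1/2)]
      linarith
    have hsinu : |Real.sin (w - c)| ≤ 1/2 :=
      le_trans Real.abs_sin_le_abs (by rw [abs_of_nonneg hu1]; linarith)
    have h1 : (124/125 : ℝ) * (7/8) ≤ Real.sin c * Real.cos (w - c) :=
      mul_le_mul hsinc hcos (by norm_num) (le_trans (by norm_num) hsinc)
    have h2 : -(1/16 : ℝ) ≤ Real.cos c * Real.sin (w - c) := by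
      have habs : |Real.cos c * Real.sin (w - c)| ≤ 1/16 := by
        rw [abs_mul]
        calc |Real.cos c| * |Real.sin (w - c)| ≤ (1/8) * (1/2) :=
              mul_le_mul (hcosc ▸ hyabs) hsinu (abs_nonneg _) (by norm_num)
          _ = 1/16 := by norm_num
      linarith [neg_abs_le (Real.cos c * Real.sin (w - c))]
    rw [hw_eq]
    linarith
  have hderiv : ∀ w : ℝ, HasDerivAt (fun w => -Real.cos w) (Real.sin w) w := fun w => by
    have := (Real.hasDerivAt_cos w).neg; simp only [neg_neg] at this; exact this
  have hcontneg : ContinuousOn (fun w => -Real.cos w) (Icc c (c + 1/2)) :=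
    (Real.continuous_cos.neg).continuousOn
  have hdiffneg : DifferentiableOn ℝ (fun w => -Real.cos w) (interior (Icc c (c + 1/2))) :=
    fun w _ => (hderiv w).differentiableAt.differentiableWithinAt
  have hdisp_low : ∀ x ∈ Icc c (c + 1/2), (4/5) * (x - c) ≤ Real.cos c - Real.cos x := by
    intro x hx
    have := (convex_Icc c (c + 1/2)).mul_sub_le_image_sub_of_le_deriv hcontneg hdiffneg
      (fun w hw => by
        rw [(hderiv w).deriv]
        exact hsin_on w (interior_subset hw))
      c (left_mem_Icc.2 (by linarith)) x hx hx.1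
    simpa using by linarith [this]
  have hdisp_up : ∀ x ∈ Icc c (c + 1/2), Real.cos c - Real.cos x ≤ x - c := by
    intro x hx
    have := (convex_Icc c (c + 1/2)).image_sub_le_mul_sub_of_deriv_le hcontneg hdiffneg
      (fun w hw => by
        rw [(hderiv w).deriv]
        exact Real.sin_le_one w)
      c (left_mem_Icc.2 (by linarith)) x hx hx.1
    simpa using by linarith [this]
  set a : ℝ := 5 * T / (4 * s) with ha_def
  have ha_pos : 0 < a := by positivity
  have ha_le : a ≤ 1/2 := by
    rw [ha_def, div_le_iff₀ (by linarith)]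
    linarith
  have hA_eq : A = -(2 * s) * Real.cos c := by
    rw [hcosc, hy_def]
    field_simp
  set ψ : ℝ → ℝ := fun x => phi (1 / (2 * T) * (-(2 * s) * Real.cos x - A)) with hψ
  have hψcont : Continuous ψ :=
    continuous_phi.comp (continuous_const.mul
      (((continuous_const.mul Real.continuous_cos)).sub continuous_const))
  have hψpos : ∀ x, 0 ≤ ψ x := fun x => (phi_pos _).le
  have hpt : ∀ x ∈ Icc (c + a) (c + 1/2),
      Real.tanh 1 * (T / s) * (x - c)⁻¹ ≤ ψ x := by
    intro x hx
    have hu1 : a ≤ x - c := by linarith [hx.1]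
    have hu2 : x - c ≤ 1/2 := by linarith [hx.2]
    have hxc : 0 < x - c := lt_of_lt_of_le ha_pos hu1
    have hxmem : x ∈ Icc c (c + 1/2) := ⟨by linarith, hx.2⟩
    have hl := hdisp_low x hxmem
    have hup := hdisp_up x hxmem
    set e : ℝ := -(2 * s) * Real.cos x - A with he_def
    have he_eq : e = 2 * s * (Real.cos c - Real.cos x) := by rw [he_def, hA_eq]; ring
    have he_low : (8/5) * s * (x - c) ≤ e := by
      rw [he_eq]
      linarith [mul_le_mul_of_nonneg_left hl hs.le]
    have he_up : e ≤ 2 * s * (x - c) := by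
      rw [he_eq]
      linarith [mul_le_mul_of_nonneg_left hup hs.le]
    have hkey : (8/5) * s * a = 2 * T := by rw [ha_def]; field_simp; ring
    have h2T : 2 * T ≤ e := by
      linarith [mul_le_mul_of_nonneg_left hu1 (by positivity : (0:ℝ) ≤ (8/5) * s)]
    set z : ℝ := 1 / (2 * T) * e with hz_def
    have hz1 : 1 ≤ z := by
      rw [hz_def]
      calc (1:ℝ) = 1 / (2 * T) * (2 * T) := by field_simp
        _ ≤ 1 / (2 * T) * e := by
            apply mul_le_mul_of_nonneg_left h2T
            positivity
    have hz_pos : 0 < z := lt_of_lt_of_le one_pos hz1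
    have hz_up : z ≤ s * (x - c) / T := by
      rw [hz_def]
      calc 1 / (2 * T) * e ≤ 1 / (2 * T) * (2 * s * (x - c)) := by
            apply mul_le_mul_of_nonneg_left he_up
            positivity
        _ = s * (x - c) / T := by field_simp
    have htanh1 : 0 < Real.tanh 1 := tanh_pos one_pos
    have h1 : Real.tanh 1 ≤ Real.tanh z := tanh_strictMono.monotone hz1
    have hψx : ψ x = Real.tanh z / z := by
      rw [hψ]
      simp only
      rw [← he_def, ← hz_def, phi, if_neg hz_pos.ne']
    rw [hψx]
    calc Real.tanh 1 * (T / s) * (x - c)⁻¹ = Real.tanh 1 / (s * (x - c) / T) := by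
          field_simp
      _ ≤ Real.tanh 1 / z := div_le_div_of_nonneg_left htanh1.le hz_pos hz_up
      _ ≤ Real.tanh z / z := by gcongr
  -- integrability of the comparison function
  have hmono_int : IntervalIntegrable (fun x => Real.tanh 1 * (T / s) * (x - c)⁻¹) volume
      (c + a) (c + 1/2) := by
    apply ContinuousOn.intervalIntegrable
    apply ContinuousOn.mul continuousOn_const
    apply ContinuousOn.inv₀ (by fun_prop)
    intro x hx
    rw [Set.uIcc_of_le (by linarith)] at hx
    have : c + a ≤ x := hx.1
    intro h0
    have : x = c := by linarith [sub_eq_zero.1 h0]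
    linarith
  have step1 : ∫ x in (c + a)..(c + 1/2), Real.tanh 1 * (T / s) * (x - c)⁻¹ ≤
      ∫ x in (c + a)..(c + 1/2), ψ x :=
    intervalIntegral.integral_mono_on (by linarith) hmono_int
      (hψcont.intervalIntegrable _ _) hpt
  have step2 : ∫ x in (c + a)..(c + 1/2), ψ x ≤ ∫ x in (-π)..π, ψ x :=
    integral_subinterval_le hψcont hψpos (by nlinarith [Real.pi_gt_three]) (by linarith) hcle
  have hval : ∫ x in (c + a)..(c + 1/2), Real.tanh 1 * (T / s) * (x - c)⁻¹ =
      Real.tanh 1 * (T / s) * Real.log (2 * s / (5 * T)) := by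
    rw [intervalIntegral.integral_const_mul]
    have hshift : (∫ x in (c + a)..(c + 1/2), (x - c)⁻¹) = ∫ u in a..(1/2:ℝ), u⁻¹ := by
      rw [intervalIntegral.integral_comp_sub_right (fun u => u⁻¹) c]
      norm_num
    rw [hshift, integral_inv_of_pos ha_pos (by norm_num)]
    congr 1
    rw [ha_def]
    field_simp
    ring
  rw [← hval]
  exact le_trans step1 step2

end core
section plumbing

lemma neelIntegrand_eq {U tz T : ℝ} (hT : 0 < T) (k1 k2 k3 : ℝ) :
    neelIntegrand U tz T k1 k2 k3 = U / (4 * T) * phi (1 / (2 * T) * bandE tz k1 k2 k3) := by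
  unfold neelIntegrand
  rcases eq_or_ne (bandE tz k1 k2 k3) 0 with h | h
  · rw [if_pos h, h]
    simp [phi]
  · rw [if_neg h, phi, if_neg (mul_ne_zero (one_div_ne_zero (by positivity)) h)]
    have hT' : (2 * T) ≠ 0 := by positivity
    field_simp
    ring

def tripNeel (U tz T : ℝ) : ℝ :=
  ∫ k₁ in (-π)..π, ∫ k₂ in (-π)..π, ∫ k₃ in (-π)..π, neelIntegrand U tz T k₁ k₂ k₃

def sliceInt (tz β k1 k2 : ℝ) : ℝ := ∫ k₃ in (-π)..π, phi (β * bandE tz k1 k2 k₃)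

def sliceInt2 (tz β k1 : ℝ) : ℝ := ∫ k₂ in (-π)..π, sliceInt tz β k1 k₂

def tripPhi (tz β : ℝ) : ℝ := ∫ k₁ in (-π)..π, sliceInt2 tz β k₁

lemma tripNeel_eq {U tz T : ℝ} (hT : 0 < T) :
    tripNeel U tz T = U / (4 * T) * tripPhi tz (1 / (2 * T)) := by
  unfold tripNeel tripPhi sliceInt2 sliceInt
  simp only [neelIntegrand_eq hT, intervalIntegral.integral_const_mul]

lemma neelEq_iff {U tz T : ℝ} :
    neelEq U tz T ↔ 1 = tripNeel U tz T / (2 * π) ^ 3 := Iff.rfl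

lemma cont_band (tz : ℝ) : Continuous fun p : (ℝ × ℝ × ℝ) × ℝ =>
    phi (p.1.1 * bandE tz p.1.2.1 p.1.2.2 p.2) := by
  apply continuous_phi.comp
  unfold bandE
  fun_prop

lemma contIn3 (tz : ℝ) : Continuous fun p : ℝ × ℝ × ℝ => sliceInt tz p.1 p.2.1 p.2.2 := by
  unfold sliceInt
  apply intervalIntegral.continuous_parametric_intervalIntegral_of_continuous' (μ := volume)
  exact cont_band tz

lemma contIn2 (tz : ℝ) : Continuous fun p : ℝ × ℝ => sliceInt2 tz p.1 p.2 := by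
  unfold sliceInt2
  apply intervalIntegral.continuous_parametric_intervalIntegral_of_continuous' (μ := volume)
  exact (contIn3 tz).comp (by fun_prop : Continuous fun q : (ℝ × ℝ) × ℝ => (q.1.1, q.1.2, q.2))

lemma contTripPhi (tz : ℝ) : Continuous (tripPhi tz) := by
  unfold tripPhi
  apply intervalIntegral.continuous_parametric_intervalIntegral_of_continuous' (μ := volume)
  exact contIn2 tz

lemma cont_sliceInt_k2 (tz β k1 : ℝ) : Continuous fun k2 => sliceInt tz β k1 k2 :=
  (contIn3 tz).comp (by fun_prop : Continuous fun k2 : ℝ => ((β, k1, k2) : ℝ × ℝ × ℝ))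

lemma cont_sliceInt2_k1 (tz β : ℝ) : Continuous fun k1 => sliceInt2 tz β k1 :=
  (contIn2 tz).comp (by fun_prop : Continuous fun k1 : ℝ => ((β, k1) : ℝ × ℝ))

lemma sliceInt_nonneg (tz β k1 k2 : ℝ) : 0 ≤ sliceInt tz β k1 k2 :=
  intervalIntegral.integral_nonneg (by linarith [Real.pi_pos]) fun u _ => (phi_pos _).le

lemma sliceInt2_nonneg (tz β k1 : ℝ) : 0 ≤ sliceInt2 tz β k1 :=
  intervalIntegral.integral_nonneg (by linarith [Real.pi_pos]) fun u _ => sliceInt_nonneg tz β k1 u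

lemma cont_neelIntegrand {U tz T : ℝ} (hT : 0 < T) :
    Continuous fun p : ℝ × ℝ × ℝ => neelIntegrand U tz T p.1 p.2.1 p.2.2 := by
  have h : (fun p : ℝ × ℝ × ℝ => neelIntegrand U tz T p.1 p.2.1 p.2.2) =
      fun p => U / (4 * T) * phi (1 / (2 * T) * bandE tz p.1 p.2.1 p.2.2) :=
    funext fun p => neelIntegrand_eq hT p.1 p.2.1 p.2.2
  rw [h]
  apply continuous_const.mul
  apply continuous_phi.comp
  unfold bandE
  fun_prop

lemma neelIntegrand_strict {U tz T T' : ℝ} (hU : 0 < U) (hT : 0 < T) (hTT' : T < T')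
    (k1 k2 k3 : ℝ) :
    neelIntegrand U tz T' k1 k2 k3 < neelIntegrand U tz T k1 k2 k3 := by
  unfold neelIntegrand
  set e := bandE tz k1 k2 k3 with he
  rcases eq_or_ne e 0 with h | h
  · rw [if_pos h, if_pos h]
    exact div_lt_div_of_pos_left hU (by linarith) (by linarith)
  · rw [if_neg h, if_neg h]
    rcases h.lt_or_gt with hneg | hpos
    · have h1 : (2 * T : ℝ) < 2 * T' := by linarith
      have harg : e / (2 * T) < e / (2 * T') := by
        rw [div_lt_div_iff₀ (by linarith) (by linarith)]
        exact mul_lt_mul_of_neg_left h1 hneg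
      have htanh := tanh_strictMono harg
      have hmul : U * Real.tanh (e / (2 * T)) < U * Real.tanh (e / (2 * T')) :=
        mul_lt_mul_of_pos_left htanh hU
      have hinv : (2 * e)⁻¹ < 0 := inv_neg''.2 (by linarith)
      have := mul_lt_mul_of_neg_right hmul hinv
      rw [div_eq_mul_inv, div_eq_mul_inv]
      exact this
    · have harg : e / (2 * T') < e / (2 * T) :=
        div_lt_div_of_pos_left hpos (by linarith) (by linarith)
      have htanh := tanh_strictMono harg
      have hmul : U * Real.tanh (e / (2 * T')) < U * Real.tanh (e / (2 * T)) :=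
        mul_lt_mul_of_pos_left htanh hU
      have hinv : (0:ℝ) < (2 * e)⁻¹ := inv_pos.2 (by linarith)
      have := mul_lt_mul_of_pos_right hmul hinv
      rw [div_eq_mul_inv, div_eq_mul_inv]
      exact this

lemma triple_integral_lt {f g : ℝ → ℝ → ℝ → ℝ}
    (hf : Continuous fun p : ℝ × ℝ × ℝ => f p.1 p.2.1 p.2.2)
    (hg : Continuous fun p : ℝ × ℝ × ℝ => g p.1 p.2.1 p.2.2)
    (h : ∀ x y z, f x y z < g x y z) :
    (∫ x in (-π)..π, ∫ y in (-π)..π, ∫ z in (-π)..π, f x y z) <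
      ∫ x in (-π)..π, ∫ y in (-π)..π, ∫ z in (-π)..π, g x y z := by
  have hpi : (-π : ℝ) < π := by linarith [Real.pi_pos]
  have hf2 : ∀ x y : ℝ, Continuous fun z => f x y z := fun x y =>
    hf.comp (by fun_prop : Continuous fun z : ℝ => ((x, y, z) : ℝ × ℝ × ℝ))
  have hg2 : ∀ x y : ℝ, Continuous fun z => g x y z := fun x y =>
    hg.comp (by fun_prop : Continuous fun z : ℝ => ((x, y, z) : ℝ × ℝ × ℝ))
  have hfI : Continuous fun p : ℝ × ℝ => ∫ z in (-π)..π, f p.1 p.2 z := by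
    apply intervalIntegral.continuous_parametric_intervalIntegral_of_continuous' (μ := volume)
    exact hf.comp (by fun_prop : Continuous fun q : (ℝ × ℝ) × ℝ => (q.1.1, q.1.2, q.2))
  have hgI : Continuous fun p : ℝ × ℝ => ∫ z in (-π)..π, g p.1 p.2 z := by
    apply intervalIntegral.continuous_parametric_intervalIntegral_of_continuous' (μ := volume)
    exact hg.comp (by fun_prop : Continuous fun q : (ℝ × ℝ) × ℝ => (q.1.1, q.1.2, q.2))
  have inner_lt : ∀ x y : ℝ, (∫ z in (-π)..π, f x y z) < ∫ z in (-π)..π, g x y z :=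
    fun x y => integral_lt_integral_of_lt (hf2 x y) (hg2 x y) (h x y) hpi
  have hfI1 : ∀ x : ℝ, Continuous fun y => ∫ z in (-π)..π, f x y z := fun x =>
    hfI.comp (by fun_prop : Continuous fun y : ℝ => ((x, y) : ℝ × ℝ))
  have hgI1 : ∀ x : ℝ, Continuous fun y => ∫ z in (-π)..π, g x y z := fun x =>
    hgI.comp (by fun_prop : Continuous fun y : ℝ => ((x, y) : ℝ × ℝ))
  have mid_lt : ∀ x : ℝ,
      (∫ y in (-π)..π, ∫ z in (-π)..π, f x y z) < ∫ y in (-π)..π, ∫ z in (-π)..π, g x y z :=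
    fun x => integral_lt_integral_of_lt (hfI1 x) (hgI1 x) (fun y => inner_lt x y) hpi
  have hfI2 : Continuous fun x => ∫ y in (-π)..π, ∫ z in (-π)..π, f x y z := by
    apply intervalIntegral.continuous_parametric_intervalIntegral_of_continuous' (μ := volume)
    exact hfI
  have hgI2 : Continuous fun x => ∫ y in (-π)..π, ∫ z in (-π)..π, g x y z := by
    apply intervalIntegral.continuous_parametric_intervalIntegral_of_continuous' (μ := volume)
    exact hgI
  exact integral_lt_integral_of_lt hfI2 hgI2 mid_lt hpi

lemma integral_le_const_1d {f : ℝ → ℝ} (hf : Continuous f) {C : ℝ}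
    (h : ∀ x, f x ≤ C) : (∫ x in (-π)..π, f x) ≤ 2 * π * C := by
  have hpi : (-π : ℝ) ≤ π := by linarith [Real.pi_pos]
  calc (∫ x in (-π)..π, f x) ≤ ∫ _x in (-π)..π, C :=
        intervalIntegral.integral_mono_on hpi (hf.intervalIntegrable _ _)
          (intervalIntegrable_const) (fun x _ => h x)
    _ = 2 * π * C := by
        rw [intervalIntegral.integral_const, smul_eq_mul]
        ring

lemma triple_integral_le_const {f : ℝ → ℝ → ℝ → ℝ}
    (hf : Continuous fun p : ℝ × ℝ × ℝ => f p.1 p.2.1 p.2.2) {C : ℝ}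
    (h : ∀ x y z, f x y z ≤ C) :
    (∫ x in (-π)..π, ∫ y in (-π)..π, ∫ z in (-π)..π, f x y z) ≤ (2 * π) ^ 3 * C := by
  have hfI : Continuous fun p : ℝ × ℝ => ∫ z in (-π)..π, f p.1 p.2 z := by
    apply intervalIntegral.continuous_parametric_intervalIntegral_of_continuous' (μ := volume)
    exact hf.comp (by fun_prop : Continuous fun q : (ℝ × ℝ) × ℝ => (q.1.1, q.1.2, q.2))
  have inner_le : ∀ x y : ℝ, (∫ z in (-π)..π, f x y z) ≤ 2 * π * C := fun x y =>
    integral_le_const_1d (hf.comp (by fun_prop : Continuous fun z : ℝ => ((x, y, z) : ℝ × ℝ × ℝ)))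
      (h x y)
  have mid_le : ∀ x : ℝ,
      (∫ y in (-π)..π, ∫ z in (-π)..π, f x y z) ≤ 2 * π * (2 * π * C) := fun x =>
    integral_le_const_1d (hfI.comp (by fun_prop : Continuous fun y : ℝ => ((x, y) : ℝ × ℝ)))
      (inner_le x)
  have hfI2 : Continuous fun x => ∫ y in (-π)..π, ∫ z in (-π)..π, f x y z := by
    apply intervalIntegral.continuous_parametric_intervalIntegral_of_continuous' (μ := volume)
    exact hfI
  calc (∫ x in (-π)..π, ∫ y in (-π)..π, ∫ z in (-π)..π, f x y z) ≤
        2 * π * (2 * π * (2 * π * C)) := integral_le_const_1d hfI2 mid_le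
    _ = (2 * π) ^ 3 * C := by ring

end plumbing
section lower

lemma neelIntegrand_le {U tz T : ℝ} (hU : 0 ≤ U) (hT : 0 < T) (k1 k2 k3 : ℝ) :
    neelIntegrand U tz T k1 k2 k3 ≤ U / (4 * T) := by
  rw [neelIntegrand_eq hT]
  exact mul_le_of_le_one_right (by positivity) (phi_le_one _)

set_option maxHeartbeats 1000000 in
lemma tripPhi_lower_pos {tz T : ℝ} (htz : 0 < tz) (hT : 0 < T) (hTs : 5 * T ≤ 2 * tz) :
    (min tz 1 / 16) ^ 2 * (Real.tanh 1 * (T / tz) * Real.log (2 * tz / (5 * T))) ≤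
      tripPhi tz (1 / (2 * T)) := by
  have hpi3 := Real.pi_gt_three
  set β : ℝ := 1 / (2 * T) with hβ_def
  set r : ℝ := min tz 1 / 16 with hr_def
  have hr_pos : 0 < r := by
    rw [hr_def]
    have : 0 < min tz 1 := lt_min htz one_pos
    linarith
  have hr_le : r ≤ 1 / 16 := by
    rw [hr_def]
    have : min tz 1 ≤ 1 := min_le_right _ _
    linarith
  have hr_tz : 4 * r ≤ tz / 4 := by
    rw [hr_def]
    have : min tz 1 ≤ tz := min_le_left _ _
    linarith
  set Q : ℝ := Real.tanh 1 * (T / tz) * Real.log (2 * tz / (5 * T)) with hQ_def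
  have hF1low : ∀ k1 ∈ Icc (π/2) (π/2 + r), ∀ k2 ∈ Icc (π/2) (π/2 + r),
      Q ≤ sliceInt tz β k1 k2 := by
    intro k1 hk1 k2 hk2
    set A : ℝ := 2 * (Real.cos k1 + Real.cos k2) with hA_def
    have hcos_bound : ∀ k ∈ Icc (π/2) (π/2 + r), |Real.cos k| ≤ r := by
      intro k hk
      have h1 : Real.cos k = Real.sin (π/2 - k) := (Real.sin_pi_div_two_sub k).symm
      rw [h1]
      refine le_trans Real.abs_sin_le_abs ?_
      rw [abs_of_nonpos (by linarith [hk.1])]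
      linarith [hk.2]
    have hA : |A| ≤ tz / 4 := by
      rw [hA_def]
      have h1 := hcos_bound k1 hk1
      have h2 := hcos_bound k2 hk2
      calc |2 * (Real.cos k1 + Real.cos k2)| ≤ 2 * (|Real.cos k1| + |Real.cos k2|) := by
            rw [abs_mul, abs_of_nonneg (by norm_num : (0:ℝ) ≤ 2)]
            exact mul_le_mul_of_nonneg_left (abs_add_le _ _) (by norm_num)
        _ ≤ 2 * (r + r) := by linarith
        _ ≤ tz / 4 := by linarith
    have hcore := core_bound hT htz hA hTs
    have heq : sliceInt tz β k1 k2 =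
        ∫ x in (-π)..π, phi (1 / (2 * T) * (-(2 * tz) * Real.cos x - A)) := by
      unfold sliceInt
      congr 1
      funext k₃
      congr 1
      rw [hβ_def, hA_def]
      unfold bandE
      ring
    rw [heq]
    exact hcore
  have hbox_sub : π/2 + r ≤ π := by linarith
  have hk2step : ∀ k1 ∈ Icc (π/2) (π/2 + r), r * Q ≤ sliceInt2 tz β k1 := by
    intro k1 hk1
    have hc := cont_sliceInt_k2 tz β k1
    have h1 : (∫ k₂ in (π/2)..(π/2 + r), (Q : ℝ)) ≤ ∫ k₂ in (π/2)..(π/2 + r), sliceInt tz β k1 k₂ :=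
      intervalIntegral.integral_mono_on (by linarith) intervalIntegrable_const
        (hc.intervalIntegrable _ _) (fun k2 hk2 => hF1low k1 hk1 k2 hk2)
    have h2 : (∫ k₂ in (π/2)..(π/2 + r), (Q:ℝ)) = r * Q := by
      rw [intervalIntegral.integral_const, smul_eq_mul]
      ring_nf
    have h3 : (∫ k₂ in (π/2)..(π/2 + r), sliceInt tz β k1 k₂) ≤ sliceInt2 tz β k1 :=
      integral_subinterval_le hc (fun k2 => sliceInt_nonneg tz β k1 k2) (by linarith)
        (by linarith) hbox_sub
    linarith
  have h1 : (∫ k₁ in (π/2)..(π/2 + r), (r * Q : ℝ)) ≤ ∫ k₁ in (π/2)..(π/2 + r), sliceInt2 tz β k₁ :=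
    intervalIntegral.integral_mono_on (by linarith) intervalIntegrable_const
      ((cont_sliceInt2_k1 tz β).intervalIntegrable _ _) (fun k1 hk1 => hk2step k1 hk1)
  have h2 : (∫ k₁ in (π/2)..(π/2 + r), (r * Q : ℝ)) = r * (r * Q) := by
    rw [intervalIntegral.integral_const, smul_eq_mul]
    ring_nf
  have h3 : (∫ k₁ in (π/2)..(π/2 + r), sliceInt2 tz β k₁) ≤ tripPhi tz β :=
    integral_subinterval_le (cont_sliceInt2_k1 tz β) (sliceInt2_nonneg tz β) (by linarith)
      (by linarith) hbox_sub
  have : r * (r * Q) ≤ tripPhi tz β := by linarith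
  nlinarith [this]

set_option maxHeartbeats 1000000 in
lemma tripPhi_lower_zero {T : ℝ} (hT : 0 < T) (hTs : 5 * T ≤ 2) :
    (1/8 : ℝ) * (2 * π * (Real.tanh 1 * T * Real.log (2 / (5 * T)))) ≤
      tripPhi 0 (1 / (2 * T)) := by
  have hpi3 := Real.pi_gt_three
  set β : ℝ := 1 / (2 * T) with hβ_def
  set Q : ℝ := Real.tanh 1 * T * Real.log (2 / (5 * T)) with hQ_def
  have hF1eq : ∀ k1 k2 : ℝ, sliceInt 0 β k1 k2 =
      2 * π * phi (1 / (2 * T) * (-(2 * 1) * Real.cos k2 - 2 * Real.cos k1)) := by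
    intro k1 k2
    unfold sliceInt
    have h : ∀ k₃ : ℝ, (β * bandE 0 k1 k2 k₃) =
        1 / (2 * T) * (-(2 * 1) * Real.cos k2 - 2 * Real.cos k1) := by
      intro k₃
      rw [hβ_def]
      unfold bandE
      ring
    simp only [h]
    rw [intervalIntegral.integral_const, smul_eq_mul]
    ring
  have hmidstep : ∀ k1 : ℝ, |2 * Real.cos k1| ≤ 1/4 → 2 * π * Q ≤ sliceInt2 0 β k1 := by
    intro k1 hA
    have hcore := core_bound (A := 2 * Real.cos k1) hT one_pos (by linarith [hA]) (by linarith)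
    have heq : sliceInt2 0 β k1 =
        2 * π * ∫ k₂ in (-π)..π, phi (1 / (2 * T) * (-(2 * 1) * Real.cos k₂ - 2 * Real.cos k1)) := by
      unfold sliceInt2
      simp only [hF1eq k1]
      rw [intervalIntegral.integral_const_mul]
    rw [heq]
    have hQle : Q ≤ ∫ k₂ in (-π)..π,
        phi (1 / (2 * T) * (-(2 * 1) * Real.cos k₂ - 2 * Real.cos k1)) := by
      rw [hQ_def]
      calc Real.tanh 1 * T * Real.log (2 / (5 * T))
          = Real.tanh 1 * (T / 1) * Real.log (2 * 1 / (5 * T)) := by norm_num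
        _ ≤ _ := hcore
    have h2pi : (0:ℝ) ≤ 2 * π := by linarith
    exact mul_le_mul_of_nonneg_left hQle h2pi
  have hcos_bound : ∀ k ∈ Icc (π/2 - 1/16) (π/2 + 1/16), |2 * Real.cos k| ≤ 1/4 := by
    intro k hk
    have h1 : Real.cos k = Real.sin (π/2 - k) := (Real.sin_pi_div_two_sub k).symm
    have h2 : |Real.cos k| ≤ 1/16 := by
      rw [h1]
      refine le_trans Real.abs_sin_le_abs ?_
      rw [abs_le]
      constructor
      · linarith [hk.2]
      · linarith [hk.1]
    rw [abs_mul, abs_of_nonneg (by norm_num : (0:ℝ) ≤ 2)]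
    linarith
  have h1 : (∫ k₁ in (π/2 - 1/16)..(π/2 + 1/16), (2 * π * Q : ℝ)) ≤
      ∫ k₁ in (π/2 - 1/16)..(π/2 + 1/16), sliceInt2 0 β k₁ :=
    intervalIntegral.integral_mono_on (by linarith) intervalIntegrable_const
      ((cont_sliceInt2_k1 0 β).intervalIntegrable _ _)
      (fun k1 hk1 => hmidstep k1 (hcos_bound k1 hk1))
  have h2 : (∫ k₁ in (π/2 - 1/16)..(π/2 + 1/16), (2 * π * Q : ℝ)) = (1/8) * (2 * π * Q) := by
    rw [intervalIntegral.integral_const, smul_eq_mul]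
    ring_nf
  have h3 : (∫ k₁ in (π/2 - 1/16)..(π/2 + 1/16), sliceInt2 0 β k₁) ≤ tripPhi 0 β :=
    integral_subinterval_le (cont_sliceInt2_k1 0 β) (sliceInt2_nonneg 0 β) (by linarith)
      (by linarith) (by linarith)
  linarith

end lower
section final

lemma tripNeel_le {U tz T : ℝ} (hU : 0 ≤ U) (hT : 0 < T) :
    tripNeel U tz T ≤ (2 * π) ^ 3 * (U / (4 * T)) := by
  unfold tripNeel
  exact triple_integral_le_const (cont_neelIntegrand hT)
    (fun x y z => neelIntegrand_le hU hT x y z)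

lemma tripNeel_strictAnti {U tz : ℝ} (hU : 0 < U) {T T' : ℝ} (hT : 0 < T) (h : T < T') :
    tripNeel U tz T' < tripNeel U tz T := by
  unfold tripNeel
  exact triple_integral_lt (cont_neelIntegrand (hT.trans h)) (cont_neelIntegrand hT)
    (fun x y z => neelIntegrand_strict hU hT h x y z)

lemma contOn_tripNeel (U tz : ℝ) : ContinuousOn (fun T => tripNeel U tz T) (Ioi (0:ℝ)) := by
  have heq : EqOn (fun T => tripNeel U tz T)
      (fun T => U / (4 * T) * tripPhi tz (1 / (2 * T))) (Ioi (0:ℝ)) :=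
    fun T hT => tripNeel_eq (mem_Ioi.1 hT)
  apply ContinuousOn.congr ?_ heq
  apply ContinuousOn.mul
  · exact continuousOn_const.div (by fun_prop) fun T hT => by
      have := mem_Ioi.1 hT; positivity
  · exact (contTripPhi tz).comp_continuousOn
      (continuousOn_const.div (by fun_prop) fun T hT => by
        have := mem_Ioi.1 hT; positivity)

lemma exists_T_small {U tz : ℝ} (hU : 0 < U) (htz : 0 ≤ tz) :
    ∃ T1 : ℝ, 0 < T1 ∧ (2 * π) ^ 3 < tripNeel U tz T1 := by
  have hpi := Real.pi_pos
  have htanh1 := tanh_pos one_pos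
  rcases htz.lt_or_eq with hpos | hzero
  · set r : ℝ := min tz 1 / 16 with hr_def
    have hr_pos : 0 < r := by
      rw [hr_def]
      have : 0 < min tz 1 := lt_min hpos one_pos
      linarith
    set C : ℝ := U * r ^ 2 * Real.tanh 1 / (4 * tz) with hC
    have hC_pos : 0 < C := by
      apply div_pos
      · exact mul_pos (mul_pos hU (pow_pos hr_pos 2)) htanh1
      · linarith
    set X : ℝ := ((2 * π) ^ 3 + 1) / C with hX
    have hX_pos : 0 < X := by positivity
    set T1 : ℝ := (2 * tz / 5) * Real.exp (-X) with hT1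
    have hT1_pos : 0 < T1 := by
      rw [hT1]
      positivity
    refine ⟨T1, hT1_pos, ?_⟩
    have hTs : 5 * T1 ≤ 2 * tz := by
      rw [hT1]
      have h1 : Real.exp (-X) ≤ 1 := Real.exp_le_one_iff.2 (by linarith)
      nlinarith
    have hlog : Real.log (2 * tz / (5 * T1)) = X := by
      have harg : 2 * tz / (5 * T1) = Real.exp X := by
        rw [hT1, Real.exp_neg]
        rw [eq_comm, eq_div_iff (by positivity)]
        field_simp
      rw [harg, Real.log_exp]
    have hlower := tripPhi_lower_pos hpos hT1_pos hTs
    rw [hlog] at hlower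
    rw [tripNeel_eq hT1_pos]
    have hcoef : (0:ℝ) < U / (4 * T1) := by positivity
    have hchain : U / (4 * T1) * (r ^ 2 * (Real.tanh 1 * (T1 / tz) * X)) ≤
        U / (4 * T1) * tripPhi tz (1 / (2 * T1)) := by
      apply mul_le_mul_of_nonneg_left ?_ hcoef.le
      calc r ^ 2 * (Real.tanh 1 * (T1 / tz) * X) =
            (min tz 1 / 16) ^ 2 * (Real.tanh 1 * (T1 / tz) * X) := by rw [hr_def]
        _ ≤ _ := hlower
    have hval : U / (4 * T1) * (r ^ 2 * (Real.tanh 1 * (T1 / tz) * X)) = C * X := by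
      rw [hC]
      field_simp
    have hCX : C * X = (2 * π) ^ 3 + 1 := by
      rw [hX]
      field_simp
    linarith
  · subst hzero
    set C : ℝ := U * 2 * π * Real.tanh 1 / 32 with hC
    have hC_pos : 0 < C := by
      apply div_pos ?_ (by norm_num)
      exact mul_pos (mul_pos (by linarith) hpi) htanh1
    set X : ℝ := ((2 * π) ^ 3 + 1) / C with hX
    have hX_pos : 0 < X := by positivity
    set T1 : ℝ := (2 / 5) * Real.exp (-X) with hT1
    have hT1_pos : 0 < T1 := by
      rw [hT1]
      positivity
    refine ⟨T1, hT1_pos, ?_⟩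
    have hTs : 5 * T1 ≤ 2 := by
      rw [hT1]
      have h1 : Real.exp (-X) ≤ 1 := Real.exp_le_one_iff.2 (by linarith)
      nlinarith
    have hlog : Real.log (2 / (5 * T1)) = X := by
      have harg : 2 / (5 * T1) = Real.exp X := by
        rw [hT1, Real.exp_neg]
        rw [eq_comm, eq_div_iff (by positivity)]
        field_simp
      rw [harg, Real.log_exp]
    have hlower := tripPhi_lower_zero hT1_pos hTs
    rw [hlog] at hlower
    rw [tripNeel_eq hT1_pos]
    have hcoef : (0:ℝ) < U / (4 * T1) := by positivity
    have hchain : U / (4 * T1) * ((1/8 : ℝ) * (2 * π * (Real.tanh 1 * T1 * X))) ≤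
        U / (4 * T1) * tripPhi 0 (1 / (2 * T1)) :=
      mul_le_mul_of_nonneg_left hlower hcoef.le
    have hval : U / (4 * T1) * ((1/8 : ℝ) * (2 * π * (Real.tanh 1 * T1 * X))) = C * X := by
      rw [hC]
      field_simp
      ring
    have hCX : C * X = (2 * π) ^ 3 + 1 := by
      rw [hX]
      field_simp
    linarith


/-- Lemma 3.2: for every `U > 0` and `t_z ≥ 0` there is a unique Néel temperature `T > 0`
solving the Néel equation, and it tends to `0` as `U ↓ 0` uniformly in `t_z ≥ 0`. -/
theorem neel_temperature_exists_unique_and_tendsto_zero :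
    (∀ U : ℝ, 0 < U → ∀ tz : ℝ, 0 ≤ tz → ∃! T : ℝ, 0 < T ∧ neelEq U tz T) ∧
    (∀ δ : ℝ, 0 < δ → ∃ U₀ > (0:ℝ), ∀ U : ℝ, 0 < U → U < U₀ → ∀ tz : ℝ, 0 ≤ tz →
      ∀ T : ℝ, 0 < T → neelEq U tz T → T < δ) := by
  have hpi := Real.pi_pos
  have hpi3 : (0:ℝ) < (2 * π) ^ 3 := by positivity
  constructor
  · intro U hU tz htz
    obtain ⟨T1, hT1pos, hT1big⟩ := exists_T_small hU htz
    set T2 : ℝ := max U (T1 + 1) with hT2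
    have hT2U : U ≤ T2 := le_max_left _ _
    have hT2pos : 0 < T2 := lt_of_lt_of_le hU hT2U
    have hT12 : T1 < T2 := lt_of_lt_of_le (lt_add_one T1) (le_max_right _ _)
    set g : ℝ → ℝ := fun T => tripNeel U tz T / (2 * π) ^ 3 with hg
    have hgcont : ContinuousOn g (Icc T1 T2) := by
      apply ContinuousOn.div_const
      exact (contOn_tripNeel U tz).mono fun x hx => mem_Ioi.2 (lt_of_lt_of_le hT1pos hx.1)
    have hgT1 : 1 < g T1 := (one_lt_div hpi3).2 hT1big
    have hgT2 : g T2 ≤ 1 := by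
      have h := tripNeel_le (tz := tz) hU.le hT2pos
      have h2 : U / (4 * T2) ≤ 1 / 4 := by
        rw [div_le_div_iff₀ (by linarith) (by norm_num)]
        linarith
      have h3 : (2 * π) ^ 3 * (U / (4 * T2)) ≤ (2 * π) ^ 3 * (1 / 4) :=
        mul_le_mul_of_nonneg_left h2 hpi3.le
      rw [hg]
      simp only
      rw [div_le_one hpi3]
      linarith
    obtain ⟨T, hTmem, hgT⟩ := intermediate_value_Icc' hT12.le hgcont ⟨hgT2, hgT1.le⟩
    have hTpos : 0 < T := lt_of_lt_of_le hT1pos hTmem.1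
    have hTtrip : tripNeel U tz T = (2 * π) ^ 3 := by
      have h : tripNeel U tz T / (2 * π) ^ 3 = 1 := hgT
      field_simp at h
      linarith
    refine ⟨T, ⟨hTpos, ?_⟩, ?_⟩
    · rw [neelEq_iff, hTtrip]
      rw [div_self hpi3.ne']
    · rintro T' ⟨hT'pos, hT'eq⟩
      have hT'trip : tripNeel U tz T' = (2 * π) ^ 3 := by
        rw [neelEq_iff] at hT'eq
        have h := hT'eq.symm
        field_simp at h
        linarith
      rcases lt_trichotomy T' T with h | h | h
      · exfalso
        have := tripNeel_strictAnti (tz := tz) hU hT'pos h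
        rw [hTtrip, hT'trip] at this
        exact lt_irrefl _ this
      · exact h
      · exfalso
        have := tripNeel_strictAnti (tz := tz) hU hTpos h
        rw [hTtrip, hT'trip] at this
        exact lt_irrefl _ this
  · intro δ hδ
    refine ⟨4 * δ, by linarith, ?_⟩
    intro U hU hU4 tz htz T hT hneel
    have hle := tripNeel_le (tz := tz) hU.le hT
    have heq : tripNeel U tz T = (2 * π) ^ 3 := by
      rw [neelEq_iff] at hneel
      have h := hneel.symm
      field_simp at h
      linarith
    rw [heq] at hle
    have h1 : (1:ℝ) ≤ U / (4 * T) := by nlinarith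
    have h2 : 4 * T ≤ U := by
      rw [le_div_iff₀ (by linarith)] at h1
      linarith
    linarith
end final
end
end

section
/- Fix U > 0 and t_z ≥ 0. If 0 ≤ T < T_N(U,t_z), then Δ = Δ_AF(U,t_z,T) is the unique point at which the function G_T attains its minimum over the interval [0, U/2]. If T ≥ T_N(U,t_z), then Δ = 0 is the unique point at which G_T attains its minimum over [0, U/2]. -/
open Real MeasureTheory Set

noncomputable section

/-- The thermodynamic Hartree–Fock free-energy functional `G_T(Δ)` (per site), for `T > 0` and,
separately, for `T = 0`. -/
def Gfun (U tz T Δ : ℝ) : ℝ :=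
  if T = 0 then
    -(∫ k₁ in (-Real.pi)..Real.pi, ∫ k₂ in (-Real.pi)..Real.pi,
        ∫ k₃ in (-Real.pi)..Real.pi,
          Real.sqrt (Δ ^ 2 + bandE tz k₁ k₂ k₃ ^ 2)) / (2 * Real.pi) ^ 3 + Δ ^ 2 / U
  else
    -2 * T * (∫ k₁ in (-Real.pi)..Real.pi, ∫ k₂ in (-Real.pi)..Real.pi,
        ∫ k₃ in (-Real.pi)..Real.pi,
          Real.log (2 * Real.cosh (Real.sqrt (Δ ^ 2 + bandE tz k₁ k₂ k₃ ^ 2) / (2 * T))))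
      / (2 * Real.pi) ^ 3 + Δ ^ 2 / U

def qfn (y : ℝ) : ℝ := if y = 0 then 1 else Real.tanh y / y

lemma continuous_tanh' : Continuous Real.tanh := by
  have : Real.tanh = fun y => Real.sinh y / Real.cosh y := by
    funext y; exact Real.tanh_eq_sinh_div_cosh y
  rw [this]
  exact Real.continuous_sinh.div Real.continuous_cosh fun x => (Real.cosh_pos x).ne'

lemma tanh_lt_one' (x : ℝ) : Real.tanh x < 1 := by
  rw [Real.tanh_eq_sinh_div_cosh, div_lt_one (Real.cosh_pos x)]
  exact Real.sinh_lt_cosh x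

lemma tanh_nonneg' {x : ℝ} (hx : 0 ≤ x) : 0 ≤ Real.tanh x := by
  have := tanh_strictMono.monotone hx
  simpa [Real.tanh_zero] using this

lemma qfn_abs (y : ℝ) : qfn |y| = qfn y := by
  rcases abs_choice y with h | h
  · rw [h]
  · rw [h]; unfold qfn
    rcases eq_or_ne y 0 with rfl | hy
    · simp
    · rw [if_neg hy, if_neg (neg_ne_zero.2 hy), Real.tanh_neg, neg_div_neg_eq]

lemma qfn_anti {a b : ℝ} (ha : 0 ≤ a) (hab : a < b) : qfn b < qfn a := by
  have hb : 0 < b := lt_of_le_of_lt ha hab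
  set r : ℝ → ℝ := fun y => y * qfn a - Real.tanh y with hr
  have hqa1 : ∀ y, a < y → 1 / Real.cosh y ^ 2 < qfn a := by
    intro y hy
    have hy0 : 0 < y := lt_of_le_of_lt ha hy
    have hcy : 1 < Real.cosh y := (Real.one_lt_cosh).2 hy0.ne'
    rcases eq_or_lt_of_le ha with rfl | ha'
    · have hq0 : qfn 0 = 1 := by simp [qfn]
      rw [hq0, div_lt_one (by positivity)]
      nlinarith
    · have hca : 1 ≤ Real.cosh a := Real.one_le_cosh a
      have hcc : Real.cosh a < Real.cosh y := by
        rw [Real.cosh_lt_cosh, abs_of_pos ha', abs_of_pos hy0]; exact hy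
      have hsa : a < Real.sinh a := Real.self_lt_sinh_iff.2 ha'
      have hsa0 : 0 < Real.sinh a := Real.sinh_pos_iff.2 ha'
      have hta : a < Real.sinh a * Real.cosh a := by nlinarith
      have h1 : 1 / Real.cosh y ^ 2 < 1 / Real.cosh a ^ 2 := by
        apply div_lt_div_of_pos_left one_pos (by positivity)
        nlinarith
      have h2 : 1 / Real.cosh a ^ 2 < qfn a := by
        rw [qfn, if_neg ha'.ne', Real.tanh_eq_sinh_div_cosh]
        rw [div_lt_div_iff₀ (by positivity) ha']
        have hkey : Real.sinh a / Real.cosh a * Real.cosh a ^ 2 =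
            Real.sinh a * Real.cosh a := by
          have := (Real.cosh_pos a).ne'
          field_simp
        rw [hkey]
        linarith
      linarith
  have hmono : StrictMonoOn r (Ici a) := by
    apply strictMonoOn_of_deriv_pos (convex_Ici a)
    · exact ((continuous_id.mul continuous_const).sub continuous_tanh').continuousOn
    · intro y hy
      rw [interior_Ici] at hy
      have hd : HasDerivAt r (qfn a - 1 / Real.cosh y ^ 2) y := by
        exact ((hasDerivAt_id y |>.mul_const (qfn a)).sub (hasDerivAt_tanh y)).congr_deriv (by simp)
      rw [hd.deriv]
      have := hqa1 y hy
      linarith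
  have hlt := hmono self_mem_Ici (mem_Ici.2 hab.le) hab
  have hra : r a = 0 := by
    rcases eq_or_lt_of_le ha with rfl | ha'
    · simp [hr]
    · simp only [hr, qfn, if_neg ha'.ne']
      field_simp
      ring
  rw [hra] at hlt
  rw [qfn, if_neg hb.ne', div_lt_iff₀ hb]
  simp only [hr] at hlt
  linarith

lemma qfn_continuous : Continuous qfn := by
  rw [continuous_iff_continuousAt]
  intro x
  rcases eq_or_ne x 0 with rfl | hx
  · rw [← continuousWithinAt_compl_self]
    have h := (hasDerivAt_tanh 0).hasDerivWithinAt (s := {(0:ℝ)}ᶜ)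
    have h2 := hasDerivWithinAt_iff_tendsto_slope.mp h
    simp only [Real.cosh_zero, one_pow, div_one] at h2
    rw [Set.diff_singleton_eq_self (by simp : (0:ℝ) ∉ ({(0:ℝ)}ᶜ : Set ℝ))] at h2
    unfold ContinuousWithinAt
    have h0 : qfn 0 = 1 := by simp [qfn]
    rw [h0]
    apply h2.congr'
    filter_upwards [self_mem_nhdsWithin] with y hy
    have hy0 : y ≠ 0 := hy
    simp [slope, qfn, hy0, Real.tanh_zero]
    exact (div_eq_inv_mul _ _).symm
  · have hev : ∀ᶠ y in nhds x, Real.tanh y / y = qfn y := by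
      filter_upwards [isOpen_compl_singleton.mem_nhds hx] with y hy
      have hy0 : y ≠ 0 := hy
      simp [qfn, hy0]
    exact (continuous_tanh'.continuousAt.div continuousAt_id hx).congr hev

lemma tangent_log_cosh {a b : ℝ} (ha : 0 ≤ a) (hb : 0 ≤ b) (hab : a ≠ b) :
    Real.log (Real.cosh a) < Real.log (Real.cosh b) + qfn b / 2 * (a ^ 2 - b ^ 2) := by
  set F : ℝ → ℝ := fun y =>
    Real.log (Real.cosh b) + qfn b / 2 * (y ^ 2 - b ^ 2) - Real.log (Real.cosh y) with hF
  have hFb : F b = 0 := by simp [hF]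
  have hder : ∀ y : ℝ, HasDerivAt F (y * (qfn b - qfn y)) y := by
    intro y
    have h1 : HasDerivAt (fun y : ℝ => Real.log (Real.cosh y)) (Real.tanh y) y := by
      have := (Real.hasDerivAt_cosh y).log (Real.cosh_pos y).ne'
      simpa [Real.tanh_eq_sinh_div_cosh] using this
    have h2 : HasDerivAt (fun y : ℝ =>
        Real.log (Real.cosh b) + qfn b / 2 * (y ^ 2 - b ^ 2)) (qfn b * y) y := by
      have := ((hasDerivAt_pow 2 y).sub_const (b ^ 2)).const_mul (qfn b / 2)
      have h3 := this.const_add (Real.log (Real.cosh b))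
      exact h3.congr_deriv (by ring)
    have := h2.sub h1
    refine this.congr_deriv ?_
    have hty : Real.tanh y = y * qfn y := by
      rcases eq_or_ne y 0 with rfl | hy
      · simp
      · rw [qfn, if_neg hy]; field_simp
    rw [hty]; ring
  have hcont : Continuous F := by
    apply (continuous_const.add (continuous_const.mul ((continuous_pow 2).sub
      continuous_const))).sub
    exact Real.continuous_cosh.log fun x => (Real.cosh_pos x).ne'
  rcases lt_or_gt_of_ne hab with h | h
  · -- a < b : F strict anti on [0, b]
    have hanti : StrictAntiOn F (Icc 0 b) := by
      apply strictAntiOn_of_deriv_neg (convex_Icc 0 b) hcont.continuousOn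
      intro y hy
      rw [interior_Icc] at hy
      rw [(hder y).deriv]
      have h1 : qfn b < qfn y := qfn_anti hy.1.le hy.2
      have h2 : 0 < y := hy.1
      nlinarith
    have := hanti (mem_Icc.2 ⟨ha, h.le⟩) (mem_Icc.2 ⟨hb, le_rfl⟩) h
    rw [hFb] at this
    simp only [hF] at this
    linarith
  · -- b < a : F strict mono on [b, ∞)
    have hmono : StrictMonoOn F (Ici b) := by
      apply strictMonoOn_of_deriv_pos (convex_Ici b) hcont.continuousOn
      intro y hy
      rw [interior_Ici] at hy
      rw [(hder y).deriv]
      have h1 : qfn y < qfn b := qfn_anti hb hy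
      have h2 : 0 < y := lt_of_le_of_lt hb hy
      nlinarith
    have := hmono self_mem_Ici (mem_Ici.2 h.le) h
    rw [hFb] at this
    simp only [hF] at this
    linarith

lemma tangent_sqrt {u v : ℝ} (hu : 0 ≤ u) (hv : 0 < v) (huv : u ≠ v) :
    Real.sqrt u < Real.sqrt v + (u - v) / (2 * Real.sqrt v) := by
  have hsu : Real.sqrt u ^ 2 = u := Real.sq_sqrt hu
  have hsv : Real.sqrt v ^ 2 = v := Real.sq_sqrt hv.le
  have hsv0 : 0 < Real.sqrt v := Real.sqrt_pos.2 hv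
  have hne : Real.sqrt u ≠ Real.sqrt v := fun h => huv (by rw [← hsu, ← hsv, h])
  rw [← sub_lt_iff_lt_add', lt_div_iff₀ (by positivity : (0:ℝ) < 2 * Real.sqrt v)]
  have h0 : 0 < |Real.sqrt u - Real.sqrt v| := abs_pos.2 (sub_ne_zero.2 hne)
  nlinarith [pow_pos h0 2, sq_abs (Real.sqrt u - Real.sqrt v)]

def I3 (f : ℝ → ℝ → ℝ → ℝ) : ℝ :=
  ∫ k₁ in (-Real.pi)..Real.pi, ∫ k₂ in (-Real.pi)..Real.pi,
    ∫ k₃ in (-Real.pi)..Real.pi, f k₁ k₂ k₃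

def Cont3 (f : ℝ → ℝ → ℝ → ℝ) : Prop :=
  Continuous fun p : ℝ × ℝ × ℝ => f p.1 p.2.1 p.2.2

lemma Cont3.cont3 {f : ℝ → ℝ → ℝ → ℝ} (hf : Cont3 f) (k₁ k₂ : ℝ) :
    Continuous fun k₃ => f k₁ k₂ k₃ := by
  have : Continuous fun k₃ : ℝ => ((k₁, k₂, k₃) : ℝ × ℝ × ℝ) := by fun_prop
  exact hf.comp this

lemma Cont3.inner {f : ℝ → ℝ → ℝ → ℝ} (hf : Cont3 f) :
    Continuous fun p : ℝ × ℝ => ∫ k₃ in (-Real.pi)..Real.pi, f p.1 p.2 k₃ := by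
  apply intervalIntegral.continuous_parametric_intervalIntegral_of_continuous'
    (f := fun (p : ℝ × ℝ) (k₃ : ℝ) => f p.1 p.2 k₃) (μ := volume)
  have : Continuous fun q : (ℝ × ℝ) × ℝ => ((q.1.1, q.1.2, q.2) : ℝ × ℝ × ℝ) := by fun_prop
  exact hf.comp this

lemma Cont3.inner2 {f : ℝ → ℝ → ℝ → ℝ} (hf : Cont3 f) (k₁ : ℝ) :
    Continuous fun k₂ => ∫ k₃ in (-Real.pi)..Real.pi, f k₁ k₂ k₃ := by
  have : Continuous fun k₂ : ℝ => ((k₁, k₂) : ℝ × ℝ) := by fun_prop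
  exact hf.inner.comp this

lemma Cont3.outer {f : ℝ → ℝ → ℝ → ℝ} (hf : Cont3 f) :
    Continuous fun k₁ => ∫ k₂ in (-Real.pi)..Real.pi,
      ∫ k₃ in (-Real.pi)..Real.pi, f k₁ k₂ k₃ := by
  apply intervalIntegral.continuous_parametric_intervalIntegral_of_continuous'
    (f := fun (k₁ k₂ : ℝ) => ∫ k₃ in (-Real.pi)..Real.pi, f k₁ k₂ k₃) (μ := volume)
  have : Continuous fun q : ℝ × ℝ => ((q.1, q.2) : ℝ × ℝ) := by fun_prop
  exact hf.inner.comp this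

lemma neg_pi_le_pi : (-Real.pi) ≤ Real.pi := by linarith [Real.pi_pos]

lemma I3_mono {f g : ℝ → ℝ → ℝ → ℝ} (hf : Cont3 f) (hg : Cont3 g)
    (h : ∀ k₁ ∈ Icc (-Real.pi) Real.pi, ∀ k₂ ∈ Icc (-Real.pi) Real.pi,
      ∀ k₃ ∈ Icc (-Real.pi) Real.pi, f k₁ k₂ k₃ ≤ g k₁ k₂ k₃) :
    I3 f ≤ I3 g := by
  apply intervalIntegral.integral_mono_on neg_pi_le_pi
    (hf.outer.intervalIntegrable _ _) (hg.outer.intervalIntegrable _ _)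
  intro k₁ hk₁
  apply intervalIntegral.integral_mono_on neg_pi_le_pi
    ((hf.inner2 k₁).intervalIntegrable _ _) ((hg.inner2 k₁).intervalIntegrable _ _)
  intro k₂ hk₂
  apply intervalIntegral.integral_mono_on neg_pi_le_pi
    ((hf.cont3 k₁ k₂).intervalIntegrable _ _) ((hg.cont3 k₁ k₂).intervalIntegrable _ _)
  intro k₃ hk₃
  exact h k₁ hk₁ k₂ hk₂ k₃ hk₃

lemma I3_add {f g : ℝ → ℝ → ℝ → ℝ} (hf : Cont3 f) (hg : Cont3 g) :
    I3 (fun a b c => f a b c + g a b c) = I3 f + I3 g := by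
  unfold I3
  have h3 : ∀ k₁ k₂ : ℝ, (∫ k₃ in (-Real.pi)..Real.pi, (f k₁ k₂ k₃ + g k₁ k₂ k₃))
      = (∫ k₃ in (-Real.pi)..Real.pi, f k₁ k₂ k₃) + ∫ k₃ in (-Real.pi)..Real.pi, g k₁ k₂ k₃ :=
    fun k₁ k₂ => intervalIntegral.integral_add
      ((hf.cont3 k₁ k₂).intervalIntegrable _ _) ((hg.cont3 k₁ k₂).intervalIntegrable _ _)
  have h2 : ∀ k₁ : ℝ, (∫ k₂ in (-Real.pi)..Real.pi,
        ((∫ k₃ in (-Real.pi)..Real.pi, f k₁ k₂ k₃) + ∫ k₃ in (-Real.pi)..Real.pi, g k₁ k₂ k₃))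
      = (∫ k₂ in (-Real.pi)..Real.pi, ∫ k₃ in (-Real.pi)..Real.pi, f k₁ k₂ k₃)
        + ∫ k₂ in (-Real.pi)..Real.pi, ∫ k₃ in (-Real.pi)..Real.pi, g k₁ k₂ k₃ :=
    fun k₁ => intervalIntegral.integral_add
      ((hf.inner2 k₁).intervalIntegrable _ _) ((hg.inner2 k₁).intervalIntegrable _ _)
  simp only [h3, h2]
  exact intervalIntegral.integral_add
    (hf.outer.intervalIntegrable _ _) (hg.outer.intervalIntegrable _ _)

lemma I3_const_mul (c : ℝ) (f : ℝ → ℝ → ℝ → ℝ) :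
    I3 (fun a b d => c * f a b d) = c * I3 f := by
  unfold I3
  simp only [intervalIntegral.integral_const_mul]

lemma I3_const (c : ℝ) : I3 (fun _ _ _ => c) = (2 * Real.pi) ^ 3 * c := by
  unfold I3
  simp only [intervalIntegral.integral_const, smul_eq_mul, sub_neg_eq_add]
  ring

lemma cont3_band (tz : ℝ) : Continuous fun p : ℝ × ℝ × ℝ => bandE tz p.1 p.2.1 p.2.2 := by
  unfold bandE; fun_prop

lemma cont3_of_comp {φ : ℝ → ℝ} (hφ : Continuous φ) (tz : ℝ) :
    Cont3 (fun k₁ k₂ k₃ => φ (bandE tz k₁ k₂ k₃)) :=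
  hφ.comp (cont3_band tz)

lemma cont3_const (c : ℝ) : Cont3 (fun _ _ _ => c) := continuous_const

lemma bandE_abs_le {tz : ℝ} (htz : 0 ≤ tz) (k₁ k₂ k₃ : ℝ) :
    |bandE tz k₁ k₂ k₃| ≤ 4 + 2 * tz := by
  unfold bandE
  rw [abs_le]
  constructor <;>
    nlinarith [Real.cos_le_one k₁, Real.neg_one_le_cos k₁, Real.cos_le_one k₂,
      Real.neg_one_le_cos k₂, Real.cos_le_one k₃, Real.neg_one_le_cos k₃]

lemma exists_min_gap {gap : ℝ → ℝ} (hcont : Continuous gap) (hpos : ∀ e, 0 < gap e) {B : ℝ}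
    (hB : 0 ≤ B) : ∃ c, 0 < c ∧ ∀ e ∈ Icc (-B) B, c ≤ gap e := by
  obtain ⟨e₀, _, hmin⟩ := isCompact_Icc.exists_isMinOn
    (Set.nonempty_Icc.2 (by linarith) : (Icc (-B) B).Nonempty) hcont.continuousOn
  exact ⟨gap e₀, hpos e₀, fun e he => hmin he⟩

lemma final_calc {P Q d U s t c : ℝ} (hd : 0 < d) (hU : 0 < U) (hc : 0 < c)
    (h : P + d * c ≤ Q + (s - t) * (d / U)) :
    -Q / d + t / U < -P / d + s / U := by
  rw [← sub_pos]
  have h2 : (-P / d + s / U) - (-Q / d + t / U) = ((Q - P) + d * ((s - t) / U)) / d := by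
    field_simp
    ring
  rw [h2]
  apply div_pos _ hd
  have h3 : (s - t) * (d / U) = d * ((s - t) / U) := by ring
  nlinarith [mul_pos hd hc]

/-- The temperature-dependent Néel kernel as a function of the band energy. -/
def Dker (t e : ℝ) : ℝ := qfn (e / (2 * t)) / (4 * t)

lemma Dker_continuous {t : ℝ} : Continuous (Dker t) :=
  (qfn_continuous.comp (continuous_id.div_const (2 * t))).div_const (4 * t)

lemma Dker_abs (t e : ℝ) (ht : 0 < t) : Dker t e = qfn (|e| / (2 * t)) / (4 * t) := by
  unfold Dker
  rw [← qfn_abs (e / (2 * t)), abs_div, abs_of_pos (by linarith : (0:ℝ) < 2 * t)]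

lemma Dker_anti {t₁ t₂ : ℝ} (h1 : 0 < t₁) (h12 : t₁ ≤ t₂) (e : ℝ) :
    Dker t₂ e ≤ Dker t₁ e := by
  have h2 : 0 < t₂ := lt_of_lt_of_le h1 h12
  rw [Dker_abs t₁ e h1, Dker_abs t₂ e h2]
  set e' := |e| with he'
  have he0 : 0 ≤ e' := abs_nonneg e
  rcases eq_or_lt_of_le he0 with h | h
  · rw [← h]
    have hq : qfn ((0:ℝ) / (2 * t₁)) = 1 := by norm_num [qfn]
    have hq2 : qfn ((0:ℝ) / (2 * t₂)) = 1 := by norm_num [qfn]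
    rw [hq, hq2]
    gcongr
  · have key : ∀ t : ℝ, 0 < t →
        qfn (e' / (2 * t)) / (4 * t) = Real.tanh (e' / (2 * t)) / (2 * e') := by
      intro t ht
      have hne : e' / (2 * t) ≠ 0 := by positivity
      rw [qfn, if_neg hne]
      field_simp
      ring
    rw [key t₁ h1, key t₂ h2]
    have harg : e' / (2 * t₂) ≤ e' / (2 * t₁) := by gcongr
    have hmono := tanh_strictMono.monotone harg
    gcongr

lemma neel_eq_Dker {U tz t : ℝ} (ht : 0 < t) (k₁ k₂ k₃ : ℝ) :
    neelIntegrand U tz t k₁ k₂ k₃ = U * Dker t (bandE tz k₁ k₂ k₃) := by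
  unfold neelIntegrand Dker
  by_cases h : bandE tz k₁ k₂ k₃ = 0
  · rw [if_pos h, h]
    have hq : qfn ((0:ℝ) / (2 * t)) = 1 := by norm_num [qfn]
    rw [hq]
    field_simp
  · rw [if_neg h, qfn, if_neg (div_ne_zero h (by positivity))]
    field_simp
    ring

lemma Gfun_zero_eq (U tz Δ : ℝ) : Gfun U tz 0 Δ
    = -(I3 (fun k₁ k₂ k₃ => Real.sqrt (Δ ^ 2 + bandE tz k₁ k₂ k₃ ^ 2))) / (2 * Real.pi) ^ 3
      + Δ ^ 2 / U := by
  unfold Gfun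
  rw [if_pos rfl]
  rfl

lemma Gfun_pos_eq (U tz T Δ : ℝ) (hT : T ≠ 0) : Gfun U tz T Δ
    = -(2 * T * I3 (fun k₁ k₂ k₃ => Real.log (2 * Real.cosh
        (Real.sqrt (Δ ^ 2 + bandE tz k₁ k₂ k₃ ^ 2) / (2 * T))))) / (2 * Real.pi) ^ 3
      + Δ ^ 2 / U := by
  unfold Gfun
  rw [if_neg hT]
  have h : (∫ k₁ in (-Real.pi)..Real.pi, ∫ k₂ in (-Real.pi)..Real.pi,
      ∫ k₃ in (-Real.pi)..Real.pi, Real.log (2 * Real.cosh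
        (Real.sqrt (Δ ^ 2 + bandE tz k₁ k₂ k₃ ^ 2) / (2 * T))))
      = I3 (fun k₁ k₂ k₃ => Real.log (2 * Real.cosh
        (Real.sqrt (Δ ^ 2 + bandE tz k₁ k₂ k₃ ^ 2) / (2 * T)))) := rfl
  rw [h]
  ring


set_option maxHeartbeats 4000000 in
/-- Lemma 3.4: below the Néel temperature, `Δ_AF` is the unique minimizer of `G_T` on
`[0, U/2]`; at or above it, `0` is the unique minimizer. -/
theorem Gfun_minimizer (U tz : ℝ) (hU : 0 < U) (htz : 0 ≤ tz)
    (TN : ℝ) (hTNpos : 0 < TN) (hTN : neelEq U tz TN) :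
    (∀ T : ℝ, 0 ≤ T → T < TN → ∀ Δ : ℝ, 0 < Δ → gapEq U tz T Δ →
      Δ ∈ Set.Icc (0:ℝ) (U / 2) ∧
      ∀ x ∈ Set.Icc (0:ℝ) (U / 2), x ≠ Δ → Gfun U tz T Δ < Gfun U tz T x) ∧
    (∀ T : ℝ, TN ≤ T →
      ∀ x ∈ Set.Icc (0:ℝ) (U / 2), x ≠ 0 → Gfun U tz T 0 < Gfun U tz T x) := by
  have hπ := Real.pi_pos
  have hd : (0:ℝ) < (2 * Real.pi) ^ 3 := by positivity
  have hB0 : (0:ℝ) ≤ 4 + 2 * tz := by linarith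
  have hsqcont : ∀ s : ℝ, Continuous fun e : ℝ => Real.sqrt (s + e ^ 2) :=
    fun s => Real.continuous_sqrt.comp (continuous_const.add (continuous_pow 2))
  have hmemIcc : ∀ k₁ k₂ k₃ : ℝ, bandE tz k₁ k₂ k₃ ∈ Icc (-(4 + 2 * tz)) (4 + 2 * tz) := by
    intro k₁ k₂ k₃
    rw [mem_Icc, ← abs_le]
    exact bandE_abs_le htz k₁ k₂ k₃
  constructor
  · -- Part 1 : below the Néel temperature
    intro T hT0 hTup Δ hΔ hgap
    have hsqpos : ∀ e : ℝ, 0 < Real.sqrt (Δ ^ 2 + e ^ 2) :=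
      fun e => Real.sqrt_pos.2 (by positivity)
    have hsqΔ : ∀ e : ℝ, Δ ≤ Real.sqrt (Δ ^ 2 + e ^ 2) := by
      intro e
      calc Δ = Real.sqrt (Δ ^ 2) := (Real.sqrt_sq hΔ.le).symm
        _ ≤ Real.sqrt (Δ ^ 2 + e ^ 2) := Real.sqrt_le_sqrt (by nlinarith)
    have hHcont : Continuous fun e : ℝ =>
        thQ (Real.sqrt (Δ ^ 2 + e ^ 2)) (2 * T) / (2 * Real.sqrt (Δ ^ 2 + e ^ 2)) := by
      have hnum : Continuous fun e : ℝ => thQ (Real.sqrt (Δ ^ 2 + e ^ 2)) (2 * T) := by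
        rcases eq_or_ne ((2:ℝ) * T) 0 with h2T | h2T
        · have heq : (fun e : ℝ => thQ (Real.sqrt (Δ ^ 2 + e ^ 2)) (2 * T))
              = fun _ : ℝ => 1 := by
            funext e; rw [thQ, if_pos h2T]
          rw [heq]; exact continuous_const
        · have heq : (fun e : ℝ => thQ (Real.sqrt (Δ ^ 2 + e ^ 2)) (2 * T))
              = fun e : ℝ => Real.tanh (Real.sqrt (Δ ^ 2 + e ^ 2) / (2 * T)) := by
            funext e; rw [thQ, if_neg h2T]
          rw [heq]
          exact continuous_tanh'.comp ((hsqcont (Δ ^ 2)).div_const (2 * T))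
      exact hnum.div (continuous_const.mul (hsqcont (Δ ^ 2)))
        (fun e => by have := hsqpos e; positivity)
    -- translate the gap equation
    have hgap' : (1:ℝ) = I3 (fun k₁ k₂ k₃ =>
        U * thQ (Real.sqrt (Δ ^ 2 + bandE tz k₁ k₂ k₃ ^ 2)) (2 * T)
          / (2 * Real.sqrt (Δ ^ 2 + bandE tz k₁ k₂ k₃ ^ 2))) / (2 * Real.pi) ^ 3 := hgap
    have hfe : (fun k₁ k₂ k₃ =>
        U * thQ (Real.sqrt (Δ ^ 2 + bandE tz k₁ k₂ k₃ ^ 2)) (2 * T)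
          / (2 * Real.sqrt (Δ ^ 2 + bandE tz k₁ k₂ k₃ ^ 2)))
        = fun k₁ k₂ k₃ => U * (thQ (Real.sqrt (Δ ^ 2 + bandE tz k₁ k₂ k₃ ^ 2)) (2 * T)
          / (2 * Real.sqrt (Δ ^ 2 + bandE tz k₁ k₂ k₃ ^ 2))) := by
      funext a b c
      rw [mul_div_assoc]
    rw [hfe] at hgap'
    have hstep : I3 (fun k₁ k₂ k₃ => U * (thQ (Real.sqrt (Δ ^ 2 + bandE tz k₁ k₂ k₃ ^ 2)) (2 * T)
          / (2 * Real.sqrt (Δ ^ 2 + bandE tz k₁ k₂ k₃ ^ 2))))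
        = U * I3 (fun k₁ k₂ k₃ => thQ (Real.sqrt (Δ ^ 2 + bandE tz k₁ k₂ k₃ ^ 2)) (2 * T)
          / (2 * Real.sqrt (Δ ^ 2 + bandE tz k₁ k₂ k₃ ^ 2))) := I3_const_mul U _
    rw [hstep] at hgap'
    rw [eq_div_iff hd.ne'] at hgap'
    have hI3H : I3 (fun k₁ k₂ k₃ => thQ (Real.sqrt (Δ ^ 2 + bandE tz k₁ k₂ k₃ ^ 2)) (2 * T)
        / (2 * Real.sqrt (Δ ^ 2 + bandE tz k₁ k₂ k₃ ^ 2))) = (2 * Real.pi) ^ 3 / U := by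
      rw [eq_div_iff hU.ne']
      linarith
    -- bounds on thQ
    have hth : ∀ e : ℝ, 0 ≤ thQ (Real.sqrt (Δ ^ 2 + e ^ 2)) (2 * T) ∧
        thQ (Real.sqrt (Δ ^ 2 + e ^ 2)) (2 * T) ≤ 1 := by
      intro e
      by_cases h2T : (2 * T : ℝ) = 0
      · rw [thQ, if_pos h2T]
        exact ⟨zero_le_one, le_refl 1⟩
      · rw [thQ, if_neg h2T]
        have hTpos : 0 < T := hT0.lt_of_ne (fun h => h2T (by rw [← h]; ring))
        refine ⟨tanh_nonneg' (div_nonneg (Real.sqrt_nonneg _) (by linarith)), (tanh_lt_one' _).le⟩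
    -- Δ ≤ U / 2
    have hΔle : Δ ≤ U / 2 := by
      have hmono : I3 (fun k₁ k₂ k₃ => thQ (Real.sqrt (Δ ^ 2 + bandE tz k₁ k₂ k₃ ^ 2)) (2 * T)
            / (2 * Real.sqrt (Δ ^ 2 + bandE tz k₁ k₂ k₃ ^ 2)))
          ≤ I3 (fun _ _ _ => 1 / (2 * Δ)) := by
        apply I3_mono (cont3_of_comp hHcont tz) (cont3_const _)
        intro k₁ _ k₂ _ k₃ _
        obtain ⟨h0, h1⟩ := hth (bandE tz k₁ k₂ k₃)
        have h2 := hsqΔ (bandE tz k₁ k₂ k₃)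
        have h3 := hsqpos (bandE tz k₁ k₂ k₃)
        exact div_le_div₀ zero_le_one h1 (by linarith) (by linarith)
      rw [hI3H, I3_const, mul_one_div, div_le_div_iff₀ hU (by linarith)] at hmono
      nlinarith
    refine ⟨⟨hΔ.le, hΔle⟩, ?_⟩
    intro x hx hxΔ
    have hx0 : 0 ≤ x := hx.1
    have hsne : x ^ 2 ≠ Δ ^ 2 := by
      intro h
      apply hxΔ
      calc x = Real.sqrt (x ^ 2) := (Real.sqrt_sq hx0).symm
        _ = Real.sqrt (Δ ^ 2) := by rw [h]
        _ = Δ := Real.sqrt_sq hΔ.le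
    rcases eq_or_ne T 0 with rfl | hTne
    · -- T = 0
      have hHval : ∀ e : ℝ, thQ (Real.sqrt (Δ ^ 2 + e ^ 2)) (2 * 0) = 1 := by
        intro e; rw [thQ, if_pos (by norm_num : (2:ℝ) * 0 = 0)]
      have hgappos : ∀ e : ℝ, 0 < Real.sqrt (Δ ^ 2 + e ^ 2) - Real.sqrt (x ^ 2 + e ^ 2)
          + (x ^ 2 - Δ ^ 2) * (thQ (Real.sqrt (Δ ^ 2 + e ^ 2)) (2 * 0)
            / (2 * Real.sqrt (Δ ^ 2 + e ^ 2))) := by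
        intro e
        have ht := tangent_sqrt (u := x ^ 2 + e ^ 2) (v := Δ ^ 2 + e ^ 2) (by positivity)
          (by positivity) (fun hcon => hsne (by linarith))
        rw [hHval e]
        have h3 := hsqpos e
        have heq : (x ^ 2 - Δ ^ 2) * (1 / (2 * Real.sqrt (Δ ^ 2 + e ^ 2)))
            = ((x ^ 2 + e ^ 2) - (Δ ^ 2 + e ^ 2)) / (2 * Real.sqrt (Δ ^ 2 + e ^ 2)) := by
          rw [mul_one_div]
          ring_nf
        rw [heq]
        linarith
      have hgapcont : Continuous (fun e : ℝ => Real.sqrt (Δ ^ 2 + e ^ 2)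
          - Real.sqrt (x ^ 2 + e ^ 2) + (x ^ 2 - Δ ^ 2)
            * (thQ (Real.sqrt (Δ ^ 2 + e ^ 2)) (2 * 0) / (2 * Real.sqrt (Δ ^ 2 + e ^ 2)))) :=
        (((hsqcont (Δ ^ 2)).sub (hsqcont (x ^ 2))).add (continuous_const.mul hHcont))
      obtain ⟨c, hc, hcmin⟩ := exists_min_gap hgapcont hgappos hB0
      have hfL : Cont3 (fun k₁ k₂ k₃ => Real.sqrt (x ^ 2 + bandE tz k₁ k₂ k₃ ^ 2) + c) :=
        cont3_of_comp (φ := fun e => Real.sqrt (x ^ 2 + e ^ 2) + c)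
          ((hsqcont (x ^ 2)).add continuous_const) tz
      have hfL1 : Cont3 (fun k₁ k₂ k₃ => Real.sqrt (x ^ 2 + bandE tz k₁ k₂ k₃ ^ 2)) :=
        cont3_of_comp (φ := fun e => Real.sqrt (x ^ 2 + e ^ 2)) (hsqcont (x ^ 2)) tz
      have hfR1 : Cont3 (fun k₁ k₂ k₃ => Real.sqrt (Δ ^ 2 + bandE tz k₁ k₂ k₃ ^ 2)) :=
        cont3_of_comp (φ := fun e => Real.sqrt (Δ ^ 2 + e ^ 2)) (hsqcont (Δ ^ 2)) tz
      have hfR2 : Cont3 (fun k₁ k₂ k₃ => (x ^ 2 - Δ ^ 2)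
          * (thQ (Real.sqrt (Δ ^ 2 + bandE tz k₁ k₂ k₃ ^ 2)) (2 * 0)
            / (2 * Real.sqrt (Δ ^ 2 + bandE tz k₁ k₂ k₃ ^ 2)))) :=
        cont3_of_comp (φ := fun e => (x ^ 2 - Δ ^ 2) * (thQ (Real.sqrt (Δ ^ 2 + e ^ 2)) (2 * 0)
            / (2 * Real.sqrt (Δ ^ 2 + e ^ 2)))) (continuous_const.mul hHcont) tz
      have hfR : Cont3 (fun k₁ k₂ k₃ => Real.sqrt (Δ ^ 2 + bandE tz k₁ k₂ k₃ ^ 2)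
          + (x ^ 2 - Δ ^ 2) * (thQ (Real.sqrt (Δ ^ 2 + bandE tz k₁ k₂ k₃ ^ 2)) (2 * 0)
            / (2 * Real.sqrt (Δ ^ 2 + bandE tz k₁ k₂ k₃ ^ 2)))) :=
        cont3_of_comp (φ := fun e => Real.sqrt (Δ ^ 2 + e ^ 2) + (x ^ 2 - Δ ^ 2)
          * (thQ (Real.sqrt (Δ ^ 2 + e ^ 2)) (2 * 0) / (2 * Real.sqrt (Δ ^ 2 + e ^ 2))))
          ((hsqcont (Δ ^ 2)).add (continuous_const.mul hHcont)) tz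
      have hkey : I3 (fun k₁ k₂ k₃ => Real.sqrt (x ^ 2 + bandE tz k₁ k₂ k₃ ^ 2) + c)
          ≤ I3 (fun k₁ k₂ k₃ => Real.sqrt (Δ ^ 2 + bandE tz k₁ k₂ k₃ ^ 2)
            + (x ^ 2 - Δ ^ 2) * (thQ (Real.sqrt (Δ ^ 2 + bandE tz k₁ k₂ k₃ ^ 2)) (2 * 0)
              / (2 * Real.sqrt (Δ ^ 2 + bandE tz k₁ k₂ k₃ ^ 2)))) := by
        apply I3_mono hfL hfR
        intro k₁ _ k₂ _ k₃ _
        have h1 := hcmin _ (hmemIcc k₁ k₂ k₃)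
        linarith
      have hL : I3 (fun k₁ k₂ k₃ => Real.sqrt (x ^ 2 + bandE tz k₁ k₂ k₃ ^ 2) + c)
          = I3 (fun k₁ k₂ k₃ => Real.sqrt (x ^ 2 + bandE tz k₁ k₂ k₃ ^ 2))
            + I3 (fun _ _ _ => c) := I3_add hfL1 (cont3_const c)
      have hR : I3 (fun k₁ k₂ k₃ => Real.sqrt (Δ ^ 2 + bandE tz k₁ k₂ k₃ ^ 2)
            + (x ^ 2 - Δ ^ 2) * (thQ (Real.sqrt (Δ ^ 2 + bandE tz k₁ k₂ k₃ ^ 2)) (2 * 0)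
              / (2 * Real.sqrt (Δ ^ 2 + bandE tz k₁ k₂ k₃ ^ 2))))
          = I3 (fun k₁ k₂ k₃ => Real.sqrt (Δ ^ 2 + bandE tz k₁ k₂ k₃ ^ 2))
            + I3 (fun k₁ k₂ k₃ => (x ^ 2 - Δ ^ 2)
              * (thQ (Real.sqrt (Δ ^ 2 + bandE tz k₁ k₂ k₃ ^ 2)) (2 * 0)
                / (2 * Real.sqrt (Δ ^ 2 + bandE tz k₁ k₂ k₃ ^ 2)))) := I3_add hfR1 hfR2
      have hR2 : I3 (fun k₁ k₂ k₃ => (x ^ 2 - Δ ^ 2)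
            * (thQ (Real.sqrt (Δ ^ 2 + bandE tz k₁ k₂ k₃ ^ 2)) (2 * 0)
              / (2 * Real.sqrt (Δ ^ 2 + bandE tz k₁ k₂ k₃ ^ 2))))
          = (x ^ 2 - Δ ^ 2) * I3 (fun k₁ k₂ k₃ =>
              thQ (Real.sqrt (Δ ^ 2 + bandE tz k₁ k₂ k₃ ^ 2)) (2 * 0)
              / (2 * Real.sqrt (Δ ^ 2 + bandE tz k₁ k₂ k₃ ^ 2))) := I3_const_mul _ _
      rw [hL, hR, hR2, hI3H, I3_const] at hkey
      rw [Gfun_zero_eq, Gfun_zero_eq]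
      exact final_calc hd hU hc hkey
    · -- T > 0
      have hT : 0 < T := hT0.lt_of_ne (Ne.symm hTne)
      have h2T : (2:ℝ) * T ≠ 0 := by positivity
      have h2T' : (0:ℝ) < 2 * T := by linarith
      have hc1 : ∀ s : ℝ, Continuous fun e : ℝ =>
          Real.log (2 * Real.cosh (Real.sqrt (s + e ^ 2) / (2 * T))) := by
        intro s
        apply Continuous.log
        · exact continuous_const.mul (Real.continuous_cosh.comp ((hsqcont s).div_const (2 * T)))
        · intro e
          have := Real.cosh_pos (Real.sqrt (s + e ^ 2) / (2 * T))
          positivity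
      have htan : ∀ e : ℝ,
          2 * T * Real.log (2 * Real.cosh (Real.sqrt (x ^ 2 + e ^ 2) / (2 * T)))
            < 2 * T * Real.log (2 * Real.cosh (Real.sqrt (Δ ^ 2 + e ^ 2) / (2 * T)))
              + (x ^ 2 - Δ ^ 2) * (thQ (Real.sqrt (Δ ^ 2 + e ^ 2)) (2 * T)
                / (2 * Real.sqrt (Δ ^ 2 + e ^ 2))) := by
        intro e
        have hb0 : 0 < Real.sqrt (Δ ^ 2 + e ^ 2) / (2 * T) := div_pos (hsqpos e) h2T'
        have ha0 : 0 ≤ Real.sqrt (x ^ 2 + e ^ 2) / (2 * T) :=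
          div_nonneg (Real.sqrt_nonneg _) h2T'.le
        have ha2 : (Real.sqrt (x ^ 2 + e ^ 2) / (2 * T)) ^ 2 = (x ^ 2 + e ^ 2) / (2 * T) ^ 2 := by
          rw [div_pow, Real.sq_sqrt (by positivity)]
        have hb2 : (Real.sqrt (Δ ^ 2 + e ^ 2) / (2 * T)) ^ 2 = (Δ ^ 2 + e ^ 2) / (2 * T) ^ 2 := by
          rw [div_pow, Real.sq_sqrt (by positivity)]
        have h4T : ((2:ℝ) * T) ^ 2 ≠ 0 := by positivity
        have hab : Real.sqrt (x ^ 2 + e ^ 2) / (2 * T) ≠ Real.sqrt (Δ ^ 2 + e ^ 2) / (2 * T) := by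
          intro h
          apply hsne
          have h2 : (Real.sqrt (x ^ 2 + e ^ 2) / (2 * T)) ^ 2
              = (Real.sqrt (Δ ^ 2 + e ^ 2) / (2 * T)) ^ 2 := by rw [h]
          rw [ha2, hb2, div_eq_div_iff (by positivity) (by positivity)] at h2
          have h5 := mul_right_cancel₀ h4T h2
          linarith
        have hlog := tangent_log_cosh ha0 hb0.le hab
        have hlc : ∀ y : ℝ, Real.log (2 * Real.cosh y) = Real.log 2 + Real.log (Real.cosh y) :=
          fun y => Real.log_mul two_ne_zero (Real.cosh_pos y).ne'
        have hid : 2 * T * (qfn (Real.sqrt (Δ ^ 2 + e ^ 2) / (2 * T)) / 2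
              * ((Real.sqrt (x ^ 2 + e ^ 2) / (2 * T)) ^ 2
                - (Real.sqrt (Δ ^ 2 + e ^ 2) / (2 * T)) ^ 2))
            = (x ^ 2 - Δ ^ 2) * (thQ (Real.sqrt (Δ ^ 2 + e ^ 2)) (2 * T)
              / (2 * Real.sqrt (Δ ^ 2 + e ^ 2))) := by
          rw [qfn, if_neg hb0.ne', thQ, if_neg h2T, ha2, hb2]
          have h1 := (hsqpos e).ne'
          have h2 := hT.ne'
          field_simp
          ring
        have hscaled := mul_lt_mul_of_pos_left hlog h2T'
        rw [hlc, hlc]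
        linarith [hscaled, hid]
      have hgappos : ∀ e : ℝ, 0 <
          2 * T * Real.log (2 * Real.cosh (Real.sqrt (Δ ^ 2 + e ^ 2) / (2 * T)))
          - 2 * T * Real.log (2 * Real.cosh (Real.sqrt (x ^ 2 + e ^ 2) / (2 * T)))
          + (x ^ 2 - Δ ^ 2) * (thQ (Real.sqrt (Δ ^ 2 + e ^ 2)) (2 * T)
            / (2 * Real.sqrt (Δ ^ 2 + e ^ 2))) := by
        intro e
        have := htan e
        linarith
      have hgapcont : Continuous (fun e : ℝ =>
          2 * T * Real.log (2 * Real.cosh (Real.sqrt (Δ ^ 2 + e ^ 2) / (2 * T)))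
          - 2 * T * Real.log (2 * Real.cosh (Real.sqrt (x ^ 2 + e ^ 2) / (2 * T)))
          + (x ^ 2 - Δ ^ 2) * (thQ (Real.sqrt (Δ ^ 2 + e ^ 2)) (2 * T)
            / (2 * Real.sqrt (Δ ^ 2 + e ^ 2)))) :=
        (((continuous_const.mul (hc1 (Δ ^ 2))).sub (continuous_const.mul (hc1 (x ^ 2)))).add
          (continuous_const.mul hHcont))
      obtain ⟨c, hc, hcmin⟩ := exists_min_gap hgapcont hgappos hB0
      have hfL1 : Cont3 (fun k₁ k₂ k₃ => 2 * T
          * Real.log (2 * Real.cosh (Real.sqrt (x ^ 2 + bandE tz k₁ k₂ k₃ ^ 2) / (2 * T)))) :=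
        cont3_of_comp (φ := fun e => 2 * T
          * Real.log (2 * Real.cosh (Real.sqrt (x ^ 2 + e ^ 2) / (2 * T))))
          (continuous_const.mul (hc1 (x ^ 2))) tz
      have hfR1 : Cont3 (fun k₁ k₂ k₃ => 2 * T
          * Real.log (2 * Real.cosh (Real.sqrt (Δ ^ 2 + bandE tz k₁ k₂ k₃ ^ 2) / (2 * T)))) :=
        cont3_of_comp (φ := fun e => 2 * T
          * Real.log (2 * Real.cosh (Real.sqrt (Δ ^ 2 + e ^ 2) / (2 * T))))
          (continuous_const.mul (hc1 (Δ ^ 2))) tz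
      have hfR2 : Cont3 (fun k₁ k₂ k₃ => (x ^ 2 - Δ ^ 2)
          * (thQ (Real.sqrt (Δ ^ 2 + bandE tz k₁ k₂ k₃ ^ 2)) (2 * T)
            / (2 * Real.sqrt (Δ ^ 2 + bandE tz k₁ k₂ k₃ ^ 2)))) :=
        cont3_of_comp (φ := fun e => (x ^ 2 - Δ ^ 2)
          * (thQ (Real.sqrt (Δ ^ 2 + e ^ 2)) (2 * T) / (2 * Real.sqrt (Δ ^ 2 + e ^ 2))))
          (continuous_const.mul hHcont) tz
      have hfL : Cont3 (fun k₁ k₂ k₃ => 2 * T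
          * Real.log (2 * Real.cosh (Real.sqrt (x ^ 2 + bandE tz k₁ k₂ k₃ ^ 2) / (2 * T))) + c) :=
        cont3_of_comp (φ := fun e => 2 * T
          * Real.log (2 * Real.cosh (Real.sqrt (x ^ 2 + e ^ 2) / (2 * T))) + c)
          ((continuous_const.mul (hc1 (x ^ 2))).add continuous_const) tz
      have hfR : Cont3 (fun k₁ k₂ k₃ => 2 * T
          * Real.log (2 * Real.cosh (Real.sqrt (Δ ^ 2 + bandE tz k₁ k₂ k₃ ^ 2) / (2 * T)))
          + (x ^ 2 - Δ ^ 2) * (thQ (Real.sqrt (Δ ^ 2 + bandE tz k₁ k₂ k₃ ^ 2)) (2 * T)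
            / (2 * Real.sqrt (Δ ^ 2 + bandE tz k₁ k₂ k₃ ^ 2)))) :=
        cont3_of_comp (φ := fun e => 2 * T
          * Real.log (2 * Real.cosh (Real.sqrt (Δ ^ 2 + e ^ 2) / (2 * T)))
          + (x ^ 2 - Δ ^ 2) * (thQ (Real.sqrt (Δ ^ 2 + e ^ 2)) (2 * T)
            / (2 * Real.sqrt (Δ ^ 2 + e ^ 2))))
          ((continuous_const.mul (hc1 (Δ ^ 2))).add (continuous_const.mul hHcont)) tz
      have hkey : I3 (fun k₁ k₂ k₃ => 2 * T
            * Real.log (2 * Real.cosh (Real.sqrt (x ^ 2 + bandE tz k₁ k₂ k₃ ^ 2) / (2 * T))) + c)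
          ≤ I3 (fun k₁ k₂ k₃ => 2 * T
            * Real.log (2 * Real.cosh (Real.sqrt (Δ ^ 2 + bandE tz k₁ k₂ k₃ ^ 2) / (2 * T)))
            + (x ^ 2 - Δ ^ 2) * (thQ (Real.sqrt (Δ ^ 2 + bandE tz k₁ k₂ k₃ ^ 2)) (2 * T)
              / (2 * Real.sqrt (Δ ^ 2 + bandE tz k₁ k₂ k₃ ^ 2)))) := by
        apply I3_mono hfL hfR
        intro k₁ _ k₂ _ k₃ _
        have h1 := hcmin _ (hmemIcc k₁ k₂ k₃)
        linarith
      have hL : I3 (fun k₁ k₂ k₃ => 2 * T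
            * Real.log (2 * Real.cosh (Real.sqrt (x ^ 2 + bandE tz k₁ k₂ k₃ ^ 2) / (2 * T))) + c)
          = I3 (fun k₁ k₂ k₃ => 2 * T
            * Real.log (2 * Real.cosh (Real.sqrt (x ^ 2 + bandE tz k₁ k₂ k₃ ^ 2) / (2 * T))))
            + I3 (fun _ _ _ => c) := I3_add hfL1 (cont3_const c)
      have hL2 : I3 (fun k₁ k₂ k₃ => 2 * T
            * Real.log (2 * Real.cosh (Real.sqrt (x ^ 2 + bandE tz k₁ k₂ k₃ ^ 2) / (2 * T))))
          = (2 * T) * I3 (fun k₁ k₂ k₃ =>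
            Real.log (2 * Real.cosh (Real.sqrt (x ^ 2 + bandE tz k₁ k₂ k₃ ^ 2) / (2 * T)))) :=
        I3_const_mul _ _
      have hR : I3 (fun k₁ k₂ k₃ => 2 * T
            * Real.log (2 * Real.cosh (Real.sqrt (Δ ^ 2 + bandE tz k₁ k₂ k₃ ^ 2) / (2 * T)))
            + (x ^ 2 - Δ ^ 2) * (thQ (Real.sqrt (Δ ^ 2 + bandE tz k₁ k₂ k₃ ^ 2)) (2 * T)
              / (2 * Real.sqrt (Δ ^ 2 + bandE tz k₁ k₂ k₃ ^ 2))))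
          = I3 (fun k₁ k₂ k₃ => 2 * T
            * Real.log (2 * Real.cosh (Real.sqrt (Δ ^ 2 + bandE tz k₁ k₂ k₃ ^ 2) / (2 * T))))
            + I3 (fun k₁ k₂ k₃ => (x ^ 2 - Δ ^ 2)
              * (thQ (Real.sqrt (Δ ^ 2 + bandE tz k₁ k₂ k₃ ^ 2)) (2 * T)
                / (2 * Real.sqrt (Δ ^ 2 + bandE tz k₁ k₂ k₃ ^ 2)))) := I3_add hfR1 hfR2
      have hR1 : I3 (fun k₁ k₂ k₃ => 2 * T
            * Real.log (2 * Real.cosh (Real.sqrt (Δ ^ 2 + bandE tz k₁ k₂ k₃ ^ 2) / (2 * T))))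
          = (2 * T) * I3 (fun k₁ k₂ k₃ =>
            Real.log (2 * Real.cosh (Real.sqrt (Δ ^ 2 + bandE tz k₁ k₂ k₃ ^ 2) / (2 * T)))) :=
        I3_const_mul _ _
      have hR2 : I3 (fun k₁ k₂ k₃ => (x ^ 2 - Δ ^ 2)
            * (thQ (Real.sqrt (Δ ^ 2 + bandE tz k₁ k₂ k₃ ^ 2)) (2 * T)
              / (2 * Real.sqrt (Δ ^ 2 + bandE tz k₁ k₂ k₃ ^ 2))))
          = (x ^ 2 - Δ ^ 2) * I3 (fun k₁ k₂ k₃ =>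
              thQ (Real.sqrt (Δ ^ 2 + bandE tz k₁ k₂ k₃ ^ 2)) (2 * T)
              / (2 * Real.sqrt (Δ ^ 2 + bandE tz k₁ k₂ k₃ ^ 2))) := I3_const_mul _ _
      rw [hL, hL2, I3_const, hR, hR1, hR2, hI3H] at hkey
      rw [Gfun_pos_eq U tz T Δ hTne, Gfun_pos_eq U tz T x hTne]
      exact final_calc hd hU hc hkey
  · -- Part 2 : at or above the Néel temperature
    intro T hTge x hx hxne
    have hT : 0 < T := lt_of_lt_of_le hTNpos hTge
    have hTne : T ≠ 0 := hT.ne'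
    have h2T : (2:ℝ) * T ≠ 0 := by positivity
    have h2T' : (0:ℝ) < 2 * T := by linarith
    have hx0 : 0 < x := (hx.1.lt_of_ne (Ne.symm hxne))
    -- translate the Néel equation
    have hTN' : (1:ℝ) = I3 (fun k₁ k₂ k₃ => neelIntegrand U tz TN k₁ k₂ k₃)
        / (2 * Real.pi) ^ 3 := hTN
    have hfe : (fun k₁ k₂ k₃ => neelIntegrand U tz TN k₁ k₂ k₃)
        = fun k₁ k₂ k₃ => U * Dker TN (bandE tz k₁ k₂ k₃) := by
      funext a b c'
      exact neel_eq_Dker hTNpos a b c'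
    rw [hfe] at hTN'
    have hstep : I3 (fun k₁ k₂ k₃ => U * Dker TN (bandE tz k₁ k₂ k₃))
        = U * I3 (fun k₁ k₂ k₃ => Dker TN (bandE tz k₁ k₂ k₃)) := I3_const_mul U _
    rw [hstep, eq_div_iff hd.ne'] at hTN'
    have hI3D : I3 (fun k₁ k₂ k₃ => Dker TN (bandE tz k₁ k₂ k₃)) = (2 * Real.pi) ^ 3 / U := by
      rw [eq_div_iff hU.ne']
      linarith
    have hc1 : ∀ s : ℝ, Continuous fun e : ℝ =>
        Real.log (2 * Real.cosh (Real.sqrt (s + e ^ 2) / (2 * T))) := by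
      intro s
      apply Continuous.log
      · exact continuous_const.mul (Real.continuous_cosh.comp ((hsqcont s).div_const (2 * T)))
      · intro e
        have := Real.cosh_pos (Real.sqrt (s + e ^ 2) / (2 * T))
        positivity
    have htan : ∀ e : ℝ,
        2 * T * Real.log (2 * Real.cosh (Real.sqrt (x ^ 2 + e ^ 2) / (2 * T)))
          < 2 * T * Real.log (2 * Real.cosh (Real.sqrt ((0:ℝ) ^ 2 + e ^ 2) / (2 * T)))
            + x ^ 2 * Dker T e := by
      intro e
      have hb' : Real.sqrt ((0:ℝ) ^ 2 + e ^ 2) = |e| := by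
        rw [show (0:ℝ) ^ 2 + e ^ 2 = e ^ 2 by ring, Real.sqrt_sq_eq_abs]
      have ha0 : 0 ≤ Real.sqrt (x ^ 2 + e ^ 2) / (2 * T) :=
        div_nonneg (Real.sqrt_nonneg _) h2T'.le
      have hb0 : 0 ≤ |e| / (2 * T) := div_nonneg (abs_nonneg e) h2T'.le
      have ha2 : (Real.sqrt (x ^ 2 + e ^ 2) / (2 * T)) ^ 2 = (x ^ 2 + e ^ 2) / (2 * T) ^ 2 := by
        rw [div_pow, Real.sq_sqrt (by positivity)]
      have hb2 : (|e| / (2 * T)) ^ 2 = e ^ 2 / (2 * T) ^ 2 := by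
        rw [div_pow, sq_abs]
      have h4T : ((2:ℝ) * T) ^ 2 ≠ 0 := by positivity
      have hab : Real.sqrt (x ^ 2 + e ^ 2) / (2 * T) ≠ |e| / (2 * T) := by
        intro h
        have h2 : (Real.sqrt (x ^ 2 + e ^ 2) / (2 * T)) ^ 2 = (|e| / (2 * T)) ^ 2 := by rw [h]
        rw [ha2, hb2, div_eq_div_iff (by positivity) (by positivity)] at h2
        have h5 := mul_right_cancel₀ h4T h2
        nlinarith
      have hlog := tangent_log_cosh ha0 hb0 hab
      have hlc : ∀ y : ℝ, Real.log (2 * Real.cosh y) = Real.log 2 + Real.log (Real.cosh y) :=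
        fun y => Real.log_mul two_ne_zero (Real.cosh_pos y).ne'
      have hid : 2 * T * (qfn (|e| / (2 * T)) / 2
            * ((Real.sqrt (x ^ 2 + e ^ 2) / (2 * T)) ^ 2 - (|e| / (2 * T)) ^ 2))
          = x ^ 2 * Dker T e := by
        rw [ha2, hb2, Dker_abs T e hT]
        have h2 := hT.ne'
        field_simp
        ring
      have hscaled := mul_lt_mul_of_pos_left hlog h2T'
      rw [hb', hlc, hlc]
      linarith [hscaled, hid]
    have hgappos : ∀ e : ℝ, 0 <
        2 * T * Real.log (2 * Real.cosh (Real.sqrt ((0:ℝ) ^ 2 + e ^ 2) / (2 * T)))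
        - 2 * T * Real.log (2 * Real.cosh (Real.sqrt (x ^ 2 + e ^ 2) / (2 * T)))
        + x ^ 2 * Dker T e := by
      intro e
      have := htan e
      linarith
    have hgapcont : Continuous (fun e : ℝ =>
        2 * T * Real.log (2 * Real.cosh (Real.sqrt ((0:ℝ) ^ 2 + e ^ 2) / (2 * T)))
        - 2 * T * Real.log (2 * Real.cosh (Real.sqrt (x ^ 2 + e ^ 2) / (2 * T)))
        + x ^ 2 * Dker T e) :=
      (((continuous_const.mul (hc1 ((0:ℝ) ^ 2))).sub (continuous_const.mul (hc1 (x ^ 2)))).add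
        (continuous_const.mul Dker_continuous))
    obtain ⟨c, hc, hcmin⟩ := exists_min_gap hgapcont hgappos hB0
    have hfL1 : Cont3 (fun k₁ k₂ k₃ => 2 * T
        * Real.log (2 * Real.cosh (Real.sqrt (x ^ 2 + bandE tz k₁ k₂ k₃ ^ 2) / (2 * T)))) :=
      cont3_of_comp (φ := fun e => 2 * T
        * Real.log (2 * Real.cosh (Real.sqrt (x ^ 2 + e ^ 2) / (2 * T))))
        (continuous_const.mul (hc1 (x ^ 2))) tz
    have hfR1 : Cont3 (fun k₁ k₂ k₃ => 2 * T
        * Real.log (2 * Real.cosh (Real.sqrt ((0:ℝ) ^ 2 + bandE tz k₁ k₂ k₃ ^ 2) / (2 * T)))) :=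
      cont3_of_comp (φ := fun e => 2 * T
        * Real.log (2 * Real.cosh (Real.sqrt ((0:ℝ) ^ 2 + e ^ 2) / (2 * T))))
        (continuous_const.mul (hc1 ((0:ℝ) ^ 2))) tz
    have hfR2 : Cont3 (fun k₁ k₂ k₃ => x ^ 2 * Dker TN (bandE tz k₁ k₂ k₃)) :=
      cont3_of_comp (φ := fun e => x ^ 2 * Dker TN e)
        (continuous_const.mul Dker_continuous) tz
    have hfL : Cont3 (fun k₁ k₂ k₃ => 2 * T
        * Real.log (2 * Real.cosh (Real.sqrt (x ^ 2 + bandE tz k₁ k₂ k₃ ^ 2) / (2 * T))) + c) :=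
      cont3_of_comp (φ := fun e => 2 * T
        * Real.log (2 * Real.cosh (Real.sqrt (x ^ 2 + e ^ 2) / (2 * T))) + c)
        ((continuous_const.mul (hc1 (x ^ 2))).add continuous_const) tz
    have hfR : Cont3 (fun k₁ k₂ k₃ => 2 * T
        * Real.log (2 * Real.cosh (Real.sqrt ((0:ℝ) ^ 2 + bandE tz k₁ k₂ k₃ ^ 2) / (2 * T)))
        + x ^ 2 * Dker TN (bandE tz k₁ k₂ k₃)) :=
      cont3_of_comp (φ := fun e => 2 * T
        * Real.log (2 * Real.cosh (Real.sqrt ((0:ℝ) ^ 2 + e ^ 2) / (2 * T)))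
        + x ^ 2 * Dker TN e)
        ((continuous_const.mul (hc1 ((0:ℝ) ^ 2))).add
          (continuous_const.mul Dker_continuous)) tz
    have hkey : I3 (fun k₁ k₂ k₃ => 2 * T
          * Real.log (2 * Real.cosh (Real.sqrt (x ^ 2 + bandE tz k₁ k₂ k₃ ^ 2) / (2 * T))) + c)
        ≤ I3 (fun k₁ k₂ k₃ => 2 * T
          * Real.log (2 * Real.cosh (Real.sqrt ((0:ℝ) ^ 2 + bandE tz k₁ k₂ k₃ ^ 2) / (2 * T)))
          + x ^ 2 * Dker TN (bandE tz k₁ k₂ k₃)) := by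
      apply I3_mono hfL hfR
      intro k₁ _ k₂ _ k₃ _
      have h1 := hcmin _ (hmemIcc k₁ k₂ k₃)
      have h2 : x ^ 2 * Dker T (bandE tz k₁ k₂ k₃) ≤ x ^ 2 * Dker TN (bandE tz k₁ k₂ k₃) :=
        mul_le_mul_of_nonneg_left (Dker_anti hTNpos hTge _) (sq_nonneg x)
      linarith
    have hL : I3 (fun k₁ k₂ k₃ => 2 * T
          * Real.log (2 * Real.cosh (Real.sqrt (x ^ 2 + bandE tz k₁ k₂ k₃ ^ 2) / (2 * T))) + c)
        = I3 (fun k₁ k₂ k₃ => 2 * T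
          * Real.log (2 * Real.cosh (Real.sqrt (x ^ 2 + bandE tz k₁ k₂ k₃ ^ 2) / (2 * T))))
          + I3 (fun _ _ _ => c) := I3_add hfL1 (cont3_const c)
    have hL2 : I3 (fun k₁ k₂ k₃ => 2 * T
          * Real.log (2 * Real.cosh (Real.sqrt (x ^ 2 + bandE tz k₁ k₂ k₃ ^ 2) / (2 * T))))
        = (2 * T) * I3 (fun k₁ k₂ k₃ =>
          Real.log (2 * Real.cosh (Real.sqrt (x ^ 2 + bandE tz k₁ k₂ k₃ ^ 2) / (2 * T)))) :=
      I3_const_mul _ _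
    have hR : I3 (fun k₁ k₂ k₃ => 2 * T
          * Real.log (2 * Real.cosh (Real.sqrt ((0:ℝ) ^ 2 + bandE tz k₁ k₂ k₃ ^ 2) / (2 * T)))
          + x ^ 2 * Dker TN (bandE tz k₁ k₂ k₃))
        = I3 (fun k₁ k₂ k₃ => 2 * T
          * Real.log (2 * Real.cosh (Real.sqrt ((0:ℝ) ^ 2 + bandE tz k₁ k₂ k₃ ^ 2) / (2 * T))))
          + I3 (fun k₁ k₂ k₃ => x ^ 2 * Dker TN (bandE tz k₁ k₂ k₃)) := I3_add hfR1 hfR2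
    have hR1 : I3 (fun k₁ k₂ k₃ => 2 * T
          * Real.log (2 * Real.cosh (Real.sqrt ((0:ℝ) ^ 2 + bandE tz k₁ k₂ k₃ ^ 2) / (2 * T))))
        = (2 * T) * I3 (fun k₁ k₂ k₃ =>
          Real.log (2 * Real.cosh (Real.sqrt ((0:ℝ) ^ 2 + bandE tz k₁ k₂ k₃ ^ 2) / (2 * T)))) :=
      I3_const_mul _ _
    have hR2 : I3 (fun k₁ k₂ k₃ => x ^ 2 * Dker TN (bandE tz k₁ k₂ k₃))
        = x ^ 2 * I3 (fun k₁ k₂ k₃ => Dker TN (bandE tz k₁ k₂ k₃)) := I3_const_mul _ _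
    rw [hL, hL2, I3_const, hR, hR1, hR2, hI3D] at hkey
    rw [Gfun_pos_eq U tz T 0 hTne, Gfun_pos_eq U tz T x hTne]
    refine final_calc hd hU hc ?_
    linarith [hkey]
end
end

section
/- For all ε > 0, all x ≥ 2 and all y ∈ [0,1] one has tanh(√(x² + ε²)/(2y))/√(x² + ε²) < tanh(ε/2)/ε. Consequently, for every U > 0, every t_z ≥ 0 and every T with 0 ≤ T ≤ T_N(U,t_z), any Δ > 0 satisfying the mean-field equation 1 = ∫_{[−π,π]³} U·tanh(√(Δ² + ε(k)²)/(2T))/(2√(Δ² + ε(k)²)) · dk/(2π)³ satisfies Δ < 2·T_N(U,t_z). -/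
open Real MeasureTheory Set

noncomputable section

lemma thQ_le_one (x y : ℝ) : thQ x y ≤ 1 := by
  unfold thQ
  split
  · exact le_rfl
  · exact (tanh_lt_one' _).le

/-- The key scaled inequality: `E < tanh (E/(2c)) * √(4c² + E²)` for `c, E > 0`. -/
lemma key_sqrt (c E : ℝ) (hc : 0 < c) (hE : 0 < E) :
    E < Real.tanh (E / (2 * c)) * Real.sqrt (4 * c ^ 2 + E ^ 2) := by
  set u := Real.sinh (E / (2 * c)) with hu
  have hu2 : E / (2 * c) < u := by
    rw [hu]
    exact Real.self_lt_sinh_iff.mpr (by positivity)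
  have hu0 : 0 < u := lt_trans (by positivity) hu2
  have hcosh : Real.cosh (E / (2 * c)) = Real.sqrt (u ^ 2 + 1) := by
    rw [← Real.cosh_sq, Real.sqrt_sq (Real.cosh_pos _).le]
  have hA : 0 < Real.sqrt (u ^ 2 + 1) := Real.sqrt_pos.mpr (by positivity)
  have hB : 0 < Real.sqrt (4 * c ^ 2 + E ^ 2) := Real.sqrt_pos.mpr (by positivity)
  have hA2 : Real.sqrt (u ^ 2 + 1) ^ 2 = u ^ 2 + 1 := Real.sq_sqrt (by positivity)
  have hB2 : Real.sqrt (4 * c ^ 2 + E ^ 2) ^ 2 = 4 * c ^ 2 + E ^ 2 :=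
    Real.sq_sqrt (by positivity)
  rw [Real.tanh_eq_sinh_div_cosh, hcosh, ← hu, div_mul_eq_mul_div, lt_div_iff₀ hA]
  -- goal : E * √(u²+1) < u * √(4c²+E²)
  have hEcu : E < 2 * c * u := by
    have := (div_lt_iff₀ (by positivity : (0:ℝ) < 2 * c)).mp hu2
    linarith
  nlinarith [mul_pos hu0 hB, mul_pos hE hA, mul_pos (mul_pos hu0 hB) (mul_pos hE hA),
    sq_nonneg (u * Real.sqrt (4 * c ^ 2 + E ^ 2) - E * Real.sqrt (u ^ 2 + 1))]

/-- The main pointwise inequality, in scaled form. -/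
lemma main_ineq (c x y E : ℝ) (hc : 0 < c) (hx : 2 * c ≤ x) (hE : 0 < E) :
    thQ (Real.sqrt (x ^ 2 + E ^ 2)) (2 * y) / Real.sqrt (x ^ 2 + E ^ 2)
      < Real.tanh (E / (2 * c)) / E := by
  have hB : 0 < Real.sqrt (4 * c ^ 2 + E ^ 2) := Real.sqrt_pos.mpr (by positivity)
  have hs : Real.sqrt (4 * c ^ 2 + E ^ 2) ≤ Real.sqrt (x ^ 2 + E ^ 2) :=
    Real.sqrt_le_sqrt (by nlinarith)
  have hspos : 0 < Real.sqrt (x ^ 2 + E ^ 2) := lt_of_lt_of_le hB hs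
  calc thQ (Real.sqrt (x ^ 2 + E ^ 2)) (2 * y) / Real.sqrt (x ^ 2 + E ^ 2)
      ≤ 1 / Real.sqrt (x ^ 2 + E ^ 2) := by
        apply div_le_div_of_nonneg_right (thQ_le_one _ _) hspos.le |>.trans_eq rfl
    _ ≤ 1 / Real.sqrt (4 * c ^ 2 + E ^ 2) := by
        apply one_div_le_one_div_of_le hB hs
    _ < Real.tanh (E / (2 * c)) / E := by
        rw [div_lt_div_iff₀ hB hE]
        have := key_sqrt c E hc hE
        nlinarith

/-- Part 1 of the theorem. -/
lemma part1 (ε : ℝ) (hε : 0 < ε) (x : ℝ) (hx : 2 ≤ x) (y : ℝ) :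
    thQ (Real.sqrt (x ^ 2 + ε ^ 2)) (2 * y) / Real.sqrt (x ^ 2 + ε ^ 2)
      < Real.tanh (ε / 2) / ε := by
  have h := main_ineq 1 x y ε one_pos (by linarith) hε
  norm_num at h
  exact h

/-- Pointwise comparison of the gap integrand with the Néel integrand, strict case. -/
lemma pointwise_lt (U tz TN T Δ k₁ k₂ k₃ : ℝ) (hU : 0 < U) (hTN : 0 < TN)
    (hΔ2 : 2 * TN ≤ Δ) (hEne : bandE tz k₁ k₂ k₃ ≠ 0) :
    U * thQ (Real.sqrt (Δ ^ 2 + bandE tz k₁ k₂ k₃ ^ 2)) (2 * T)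
        / (2 * Real.sqrt (Δ ^ 2 + bandE tz k₁ k₂ k₃ ^ 2))
      < neelIntegrand U tz TN k₁ k₂ k₃ := by
  set E := bandE tz k₁ k₂ k₃ with hE
  rw [neelIntegrand, ← hE, if_neg hEne]
  have habs : Real.tanh (E / (2 * TN)) / E = Real.tanh (|E| / (2 * TN)) / |E| := by
    rcases abs_cases E with ⟨h1, _⟩ | ⟨h1, _⟩
    · rw [h1]
    · rw [h1, neg_div, Real.tanh_neg]; ring
  have hEabs : 0 < |E| := abs_pos.mpr hEne
  have h := main_ineq TN Δ T |E| hTN hΔ2 hEabs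
  rw [sq_abs] at h
  have h2 : U * thQ (Real.sqrt (Δ ^ 2 + E ^ 2)) (2 * T) / (2 * Real.sqrt (Δ ^ 2 + E ^ 2))
      = (U / 2) * (thQ (Real.sqrt (Δ ^ 2 + E ^ 2)) (2 * T) / Real.sqrt (Δ ^ 2 + E ^ 2)) := by
    ring
  have h3 : U * Real.tanh (E / (2 * TN)) / (2 * E)
      = (U / 2) * (Real.tanh (E / (2 * TN)) / E) := by ring
  rw [h2, h3, habs]
  exact mul_lt_mul_of_pos_left h (by positivity)

/-- Pointwise comparison of the gap integrand with the Néel integrand, weak form. -/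
lemma pointwise_le (U tz TN T Δ k₁ k₂ k₃ : ℝ) (hU : 0 < U) (hTN : 0 < TN)
    (hΔ : 0 < Δ) (hΔ2 : 2 * TN ≤ Δ) :
    U * thQ (Real.sqrt (Δ ^ 2 + bandE tz k₁ k₂ k₃ ^ 2)) (2 * T)
        / (2 * Real.sqrt (Δ ^ 2 + bandE tz k₁ k₂ k₃ ^ 2))
      ≤ neelIntegrand U tz TN k₁ k₂ k₃ := by
  rcases eq_or_ne (bandE tz k₁ k₂ k₃) 0 with hE | hE
  · rw [neelIntegrand, if_pos hE, hE]
    have hs : Real.sqrt (Δ ^ 2 + (0:ℝ) ^ 2) = Δ := by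
      rw [show Δ ^ 2 + (0:ℝ) ^ 2 = Δ ^ 2 by ring, Real.sqrt_sq hΔ.le]
    rw [hs]
    calc U * thQ Δ (2 * T) / (2 * Δ) ≤ U * 1 / (2 * Δ) := by
          apply div_le_div_of_nonneg_right _ (by positivity)
          exact mul_le_mul_of_nonneg_left (thQ_le_one _ _) hU.le
      _ ≤ U / (4 * TN) := by
          rw [mul_one]
          apply div_le_div_of_nonneg_left hU.le (by positivity) (by linarith)
  · exact (pointwise_lt U tz TN T Δ k₁ k₂ k₃ hU hTN hΔ2 hE).le

/-- Continuity of `t ↦ tanh (t/(2c)) / t` extended by `1/(2c)` at `0`. -/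
lemma cont_phi (c : ℝ) (hc : 0 < c) :
    Continuous (fun t : ℝ => if t = 0 then 1 / (2 * c) else Real.tanh (t / (2 * c)) / t) := by
  set φ : ℝ → ℝ := fun t => if t = 0 then 1 / (2 * c) else Real.tanh (t / (2 * c)) / t with hφ
  rw [continuous_iff_continuousAt]
  intro t
  rcases eq_or_ne t 0 with rfl | ht
  · -- continuity at 0 via the derivative of tanh at 0
    have hL : HasDerivAt (fun s : ℝ => s / (2 * c)) (1 / (2 * c)) 0 := by
      simpa using (hasDerivAt_id (0:ℝ)).div_const (2 * c)
    have hsinh : HasDerivAt (fun s : ℝ => Real.sinh (s / (2 * c))) (1 / (2 * c)) 0 := by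
      have h := (Real.hasDerivAt_sinh ((0:ℝ) / (2 * c))).comp 0 hL
      simpa [Function.comp_def] using h
    have hcosh : HasDerivAt (fun s : ℝ => Real.cosh (s / (2 * c))) 0 0 := by
      have h := (Real.hasDerivAt_cosh ((0:ℝ) / (2 * c))).comp 0 hL
      simpa [Function.comp_def] using h
    have hd : HasDerivAt (fun s : ℝ => Real.tanh (s / (2 * c))) (1 / (2 * c)) 0 := by
      have hne : Real.cosh ((0:ℝ) / (2 * c)) ≠ 0 := (Real.cosh_pos _).ne'
      have h := hsinh.div hcosh hne
      have heq : (fun s : ℝ => Real.sinh (s / (2 * c)) / Real.cosh (s / (2 * c)))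
          = fun s : ℝ => Real.tanh (s / (2 * c)) := by
        funext s; rw [Real.tanh_eq_sinh_div_cosh]
      rw [show ((fun s : ℝ => Real.sinh (s / (2 * c))) / fun s : ℝ => Real.cosh (s / (2 * c))) = fun s : ℝ => Real.sinh (s / (2 * c)) / Real.cosh (s / (2 * c)) from rfl, heq] at h
      simpa using h
    have hslope := hasDerivAt_iff_tendsto_slope.mp hd
    have htend : Filter.Tendsto φ (nhdsWithin 0 {(0:ℝ)}ᶜ) (nhds (1 / (2 * c))) := by
      apply hslope.congr'
      filter_upwards [self_mem_nhdsWithin] with s hs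
      have hs0 : s ≠ 0 := hs
      rw [hφ]
      simp only [slope_def_field, if_neg hs0]
      rw [show Real.tanh ((0:ℝ) / (2 * c)) = 0 by simp [Real.tanh_zero]]
      field_simp
      ring
    have hpure : Filter.Tendsto φ (pure (0:ℝ)) (nhds (1 / (2 * c))) := by
      have : φ 0 = 1 / (2 * c) := by simp [hφ]
      simpa [this] using tendsto_pure_nhds φ (0:ℝ)
    have hφ0 : φ 0 = 1 / (2 * c) := by simp [hφ]
    rw [ContinuousAt, hφ0, ← nhdsNE_sup_pure (0:ℝ)]
    exact Filter.tendsto_sup.mpr ⟨htend, hpure⟩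
  · have hbase : ContinuousAt (fun s : ℝ => Real.tanh (s / (2 * c)) / s) t := by
      apply ContinuousAt.div
      · exact (continuous_tanh'.comp (continuous_id.div_const (2 * c))).continuousAt
      · exact continuousAt_id
      · exact ht
    apply hbase.congr
    filter_upwards [eventually_ne_nhds ht] with s hs
    simp [hφ, hs]

/-- The Néel integrand in terms of the extended function. -/
lemma neel_eq_phi (U tz TN k₁ k₂ k₃ : ℝ) (hTN : 0 < TN) :
    neelIntegrand U tz TN k₁ k₂ k₃
      = (U / 2) * (if bandE tz k₁ k₂ k₃ = 0 then 1 / (2 * TN)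
          else Real.tanh (bandE tz k₁ k₂ k₃ / (2 * TN)) / bandE tz k₁ k₂ k₃) := by
  rw [neelIntegrand]
  split
  · ring
  · ring

/-- Positivity of an interval integral of a nonnegative continuous function positive at a
point. -/
lemma integral_pos_of_nonneg (f : ℝ → ℝ) (hf : Continuous f) (h0 : ∀ x, 0 ≤ f x)
    (a b c : ℝ) (hab : a < b) (hac : a ≤ c) (hcb : c ≤ b) (hfc : 0 < f c) :
    0 < ∫ x in a..b, f x := by
  obtain ⟨δ, hδ, hball⟩ : ∃ δ > 0, ∀ x, |x - c| < δ → f c / 2 < f x := by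
    obtain ⟨δ, hδ, h⟩ := Metric.continuousAt_iff.mp hf.continuousAt (f c / 2) (by positivity)
    refine ⟨δ, hδ, fun x hx => ?_⟩
    have := h (show dist x c < δ by rwa [Real.dist_eq])
    rw [Real.dist_eq] at this
    have := abs_lt.mp this
    linarith [this.1]
  set a' := max a (c - δ / 2) with ha'
  set b' := min b (c + δ / 2) with hb'
  have haa' : a ≤ a' := le_max_left _ _
  have hb'b : b' ≤ b := min_le_left _ _
  have ha'b' : a' < b' := by
    rw [ha', hb']
    rw [max_lt_iff]
    constructor
    · rw [lt_min_iff]; constructor <;> linarith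
    · rw [lt_min_iff]; constructor <;> linarith
  have hkey : ∀ x ∈ Set.Icc a' b', f c / 2 ≤ f x := by
    intro x hx
    have h1 : c - δ / 2 ≤ x := le_trans (le_max_right _ _) hx.1
    have h2 : x ≤ c + δ / 2 := le_trans hx.2 (min_le_right _ _)
    exact (hball x (by rw [abs_lt]; constructor <;> linarith)).le
  have hint : ∀ u v : ℝ, IntervalIntegrable f volume u v := fun u v =>
    hf.intervalIntegrable u v
  have hmid : 0 < ∫ x in a'..b', f x := by
    have hc : (∫ _ in a'..b', f c / 2) ≤ ∫ x in a'..b', f x :=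
      intervalIntegral.integral_mono_on ha'b'.le (intervalIntegrable_const) (hint a' b') hkey
    rw [intervalIntegral.integral_const] at hc
    have : 0 < (b' - a') • (f c / 2) := by
      rw [smul_eq_mul]
      have : 0 < b' - a' := by linarith
      positivity
    linarith
  have h1 : 0 ≤ ∫ x in a..a', f x := intervalIntegral.integral_nonneg haa' fun x _ => h0 x
  have h3 : 0 ≤ ∫ x in b'..b, f x := intervalIntegral.integral_nonneg hb'b fun x _ => h0 x
  have split1 : (∫ x in a..a', f x) + ∫ x in a'..b, f x = ∫ x in a..b, f x :=
    intervalIntegral.integral_add_adjacent_intervals (hint a a') (hint a' b)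
  have split2 : (∫ x in a'..b', f x) + ∫ x in b'..b, f x = ∫ x in a'..b, f x :=
    intervalIntegral.integral_add_adjacent_intervals (hint a' b') (hint b' b)
  linarith

set_option maxHeartbeats 2000000 in
/-- Lemma 6.1: the pointwise inequality (3.1), and consequently any positive solution of the
gap equation at a temperature `T ≤ T_N` satisfies `Δ < 2 T_N`. -/
theorem gap_lt_twice_neel :
    (∀ ε : ℝ, 0 < ε → ∀ x : ℝ, 2 ≤ x → ∀ y ∈ Set.Icc (0:ℝ) 1,
      thQ (Real.sqrt (x ^ 2 + ε ^ 2)) (2 * y) / Real.sqrt (x ^ 2 + ε ^ 2)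
        < Real.tanh (ε / 2) / ε) ∧
    (∀ U tz : ℝ, 0 < U → 0 ≤ tz → ∀ TN : ℝ, 0 < TN → neelEq U tz TN →
      ∀ T : ℝ, 0 ≤ T → T ≤ TN → ∀ Δ : ℝ, 0 < Δ → gapEq U tz T Δ → Δ < 2 * TN) := by
  constructor
  · intro ε hε x hx y _
    exact part1 ε hε x hx y
  · intro U tz hU htz TN hTN hneel T hT0 hTTN Δ hΔ hgap
    by_contra hcon
    push_neg at hcon
    -- `hcon : 2 * TN ≤ Δ`
    have hπ : (0:ℝ) < Real.pi := Real.pi_pos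
    unfold neelEq at hneel
    unfold gapEq at hgap
    set N : ℝ → ℝ → ℝ → ℝ := fun k₁ k₂ k₃ => neelIntegrand U tz TN k₁ k₂ k₃ with hN
    set G : ℝ → ℝ → ℝ → ℝ := fun k₁ k₂ k₃ =>
      U * thQ (Real.sqrt (Δ ^ 2 + bandE tz k₁ k₂ k₃ ^ 2)) (2 * T)
        / (2 * Real.sqrt (Δ ^ 2 + bandE tz k₁ k₂ k₃ ^ 2)) with hGdef
    -- continuity of the band relation and of the two integrands
    have hband : Continuous (fun p : ℝ × ℝ × ℝ => bandE tz p.1 p.2.1 p.2.2) := by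
      unfold bandE; fun_prop
    have hargpos : ∀ p : ℝ × ℝ × ℝ, 0 < Δ ^ 2 + bandE tz p.1 p.2.1 p.2.2 ^ 2 := fun p =>
      add_pos_of_pos_of_nonneg (pow_pos hΔ 2) (sq_nonneg _)
    have hspos : ∀ p : ℝ × ℝ × ℝ, 0 < Real.sqrt (Δ ^ 2 + bandE tz p.1 p.2.1 p.2.2 ^ 2) :=
      fun p => Real.sqrt_pos.mpr (hargpos p)
    have hscont : Continuous (fun p : ℝ × ℝ × ℝ =>
        Real.sqrt (Δ ^ 2 + bandE tz p.1 p.2.1 p.2.2 ^ 2)) :=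
      (continuous_const.add (hband.pow 2)).sqrt
    have hGc : Continuous (fun p : ℝ × ℝ × ℝ => G p.1 p.2.1 p.2.2) := by
      rcases eq_or_ne T 0 with rfl | hTne
      · have heq : (fun p : ℝ × ℝ × ℝ => G p.1 p.2.1 p.2.2)
            = fun p => U / (2 * Real.sqrt (Δ ^ 2 + bandE tz p.1 p.2.1 p.2.2 ^ 2)) := by
          funext p
          simp [hGdef, thQ]
        rw [heq]
        exact continuous_const.div (continuous_const.mul hscont)
          fun p => by have := hspos p; positivity
      · have h2T : (2 * T) ≠ 0 := by
          have : 0 < T := lt_of_le_of_ne hT0 (Ne.symm hTne)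
          positivity
        have heq : (fun p : ℝ × ℝ × ℝ => G p.1 p.2.1 p.2.2)
            = fun p => U * Real.tanh (Real.sqrt (Δ ^ 2 + bandE tz p.1 p.2.1 p.2.2 ^ 2) / (2 * T))
                / (2 * Real.sqrt (Δ ^ 2 + bandE tz p.1 p.2.1 p.2.2 ^ 2)) := by
          funext p
          simp [hGdef, thQ, h2T]
        rw [heq]
        exact (continuous_const.mul (continuous_tanh'.comp (hscont.div_const _))).div
          (continuous_const.mul hscont) fun p => by have := hspos p; positivity
    have hNc : Continuous (fun p : ℝ × ℝ × ℝ => N p.1 p.2.1 p.2.2) := by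
      have heq : (fun p : ℝ × ℝ × ℝ => N p.1 p.2.1 p.2.2)
          = fun p => (U / 2) * ((fun t : ℝ => if t = 0 then 1 / (2 * TN)
              else Real.tanh (t / (2 * TN)) / t) (bandE tz p.1 p.2.1 p.2.2)) := by
        funext p
        exact neel_eq_phi U tz TN p.1 p.2.1 p.2.2 hTN
      rw [heq]
      exact continuous_const.mul ((cont_phi TN hTN).comp hband)
    have huc3 : Continuous (fun r : (ℝ × ℝ) × ℝ => ((r.1.1, r.1.2, r.2) : ℝ × ℝ × ℝ)) := by
      fun_prop
    have huc2 : Continuous (fun r : ℝ × ℝ => ((r.1, r.2) : ℝ × ℝ)) := by fun_prop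
    set Nf : ℝ × ℝ × ℝ → ℝ := fun p => N p.1 p.2.1 p.2.2 with hNfdef
    set Gf : ℝ × ℝ × ℝ → ℝ := fun p => G p.1 p.2.1 p.2.2 with hGfdef
    have hNfc : Continuous Nf := by rw [hNfdef]; exact hNc
    have hGfc : Continuous Gf := by rw [hGfdef]; exact hGc
    -- pointwise comparison
    set D : ℝ × ℝ × ℝ → ℝ := fun p => Nf p - Gf p with hDdef
    have hDc : Continuous D := by rw [hDdef]; exact hNfc.sub hGfc
    have hDnn : ∀ p : ℝ × ℝ × ℝ, 0 ≤ D p := by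
      intro p
      rw [hDdef]
      simp only [hNfdef, hGfdef, hN, hGdef]
      exact sub_nonneg.mpr (pointwise_le U tz TN T Δ p.1 p.2.1 p.2.2 hU hTN hΔ hcon)
    have hD0 : 0 < D (0, 0, 0) := by
      have hEne : bandE tz (0:ℝ) 0 0 ≠ 0 := by
        unfold bandE
        simp only [Real.cos_zero]
        intro h
        nlinarith
      rw [hDdef]
      simp only [hNfdef, hGfdef, hN, hGdef]
      exact sub_pos.mpr (pointwise_lt U tz TN T Δ 0 0 0 hU hTN hcon hEne)
    -- the nested integrals of D
    set D₂ : ℝ × ℝ → ℝ := fun q => ∫ k₃ in (-Real.pi)..Real.pi, D (q.1, q.2, k₃) with hD₂def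
    have hD₂c : Continuous D₂ := by
      rw [hD₂def]
      exact intervalIntegral.continuous_parametric_intervalIntegral_of_continuous'
        (f := fun (q : ℝ × ℝ) (k₃ : ℝ) => D (q.1, q.2, k₃)) (hDc.comp huc3) (-Real.pi) Real.pi
    have hD₂nn : ∀ q : ℝ × ℝ, 0 ≤ D₂ q := fun q =>
      intervalIntegral.integral_nonneg (by linarith) fun x _ => hDnn _
    have hD₂0 : 0 < D₂ (0, 0) := by
      apply integral_pos_of_nonneg (fun k₃ => D (0, 0, k₃)) (hDc.comp (by fun_prop))
        (fun x => hDnn _) (-Real.pi) Real.pi 0 (by linarith) (by linarith) hπ.le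
      exact hD0
    set D₁ : ℝ → ℝ := fun k₁ => ∫ k₂ in (-Real.pi)..Real.pi, D₂ (k₁, k₂) with hD₁def
    have hD₁c : Continuous D₁ := by
      rw [hD₁def]
      exact intervalIntegral.continuous_parametric_intervalIntegral_of_continuous'
        (f := fun (k₁ : ℝ) (k₂ : ℝ) => D₂ (k₁, k₂)) (hD₂c.comp huc2) (-Real.pi) Real.pi
    have hD₁nn : ∀ k₁ : ℝ, 0 ≤ D₁ k₁ := fun k₁ =>
      intervalIntegral.integral_nonneg (by linarith) fun x _ => hD₂nn _
    have hD₁0 : 0 < D₁ 0 := by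
      apply integral_pos_of_nonneg (fun k₂ => D₂ (0, k₂)) (hD₂c.comp (by fun_prop))
        (fun x => hD₂nn _) (-Real.pi) Real.pi 0 (by linarith) (by linarith) hπ.le
      exact hD₂0
    have hDpos : 0 < ∫ k₁ in (-Real.pi)..Real.pi, D₁ k₁ :=
      integral_pos_of_nonneg D₁ hD₁c hD₁nn (-Real.pi) Real.pi 0 (by linarith) (by linarith)
        hπ.le hD₁0
    -- the nested integrals of N and G
    set IN : ℝ × ℝ → ℝ := fun q => ∫ k₃ in (-Real.pi)..Real.pi, Nf (q.1, q.2, k₃) with hINdef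
    set IG : ℝ × ℝ → ℝ := fun q => ∫ k₃ in (-Real.pi)..Real.pi, Gf (q.1, q.2, k₃) with hIGdef
    have hINc : Continuous IN := by
      rw [hINdef]
      exact intervalIntegral.continuous_parametric_intervalIntegral_of_continuous'
        (f := fun (q : ℝ × ℝ) (k₃ : ℝ) => Nf (q.1, q.2, k₃)) (hNfc.comp huc3) (-Real.pi) Real.pi
    have hIGc : Continuous IG := by
      rw [hIGdef]
      exact intervalIntegral.continuous_parametric_intervalIntegral_of_continuous'
        (f := fun (q : ℝ × ℝ) (k₃ : ℝ) => Gf (q.1, q.2, k₃)) (hGfc.comp huc3) (-Real.pi) Real.pi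
    have hsplit₂ : ∀ q : ℝ × ℝ, D₂ q = IN q - IG q := by
      intro q
      rw [hD₂def, hINdef, hIGdef]
      simp only [hDdef]
      exact intervalIntegral.integral_sub
        ((hNfc.comp (by fun_prop : Continuous fun k₃ : ℝ => ((q.1, q.2, k₃) : ℝ × ℝ × ℝ))).intervalIntegrable _ _)
        ((hGfc.comp (by fun_prop : Continuous fun k₃ : ℝ => ((q.1, q.2, k₃) : ℝ × ℝ × ℝ))).intervalIntegrable _ _)
    set IN₁ : ℝ → ℝ := fun k₁ => ∫ k₂ in (-Real.pi)..Real.pi, IN (k₁, k₂) with hIN₁def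
    set IG₁ : ℝ → ℝ := fun k₁ => ∫ k₂ in (-Real.pi)..Real.pi, IG (k₁, k₂) with hIG₁def
    have hIN₁c : Continuous IN₁ := by
      rw [hIN₁def]
      exact intervalIntegral.continuous_parametric_intervalIntegral_of_continuous'
        (f := fun (k₁ : ℝ) (k₂ : ℝ) => IN (k₁, k₂)) (hINc.comp huc2) (-Real.pi) Real.pi
    have hIG₁c : Continuous IG₁ := by
      rw [hIG₁def]
      exact intervalIntegral.continuous_parametric_intervalIntegral_of_continuous'
        (f := fun (k₁ : ℝ) (k₂ : ℝ) => IG (k₁, k₂)) (hIGc.comp huc2) (-Real.pi) Real.pi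
    have hsplit₁ : ∀ k₁ : ℝ, D₁ k₁ = IN₁ k₁ - IG₁ k₁ := by
      intro k₁
      rw [hD₁def, hIN₁def, hIG₁def]
      simp only [hsplit₂]
      exact intervalIntegral.integral_sub
        ((hINc.comp (by fun_prop : Continuous fun k₂ : ℝ => ((k₁, k₂) : ℝ × ℝ))).intervalIntegrable _ _)
        ((hIGc.comp (by fun_prop : Continuous fun k₂ : ℝ => ((k₁, k₂) : ℝ × ℝ))).intervalIntegrable _ _)
    have hsplit₀ : (∫ k₁ in (-Real.pi)..Real.pi, D₁ k₁)
        = (∫ k₁ in (-Real.pi)..Real.pi, IN₁ k₁) - ∫ k₁ in (-Real.pi)..Real.pi, IG₁ k₁ := by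
      simp only [hsplit₁]
      exact intervalIntegral.integral_sub (hIN₁c.intervalIntegrable _ _)
        (hIG₁c.intervalIntegrable _ _)
    -- identify the triple integrals with the ones in the hypotheses
    have hNtot : (∫ k₁ in (-Real.pi)..Real.pi, IN₁ k₁) = (2 * Real.pi) ^ 3 := by
      have h : (1:ℝ) * (2 * Real.pi) ^ 3
          = (∫ k₁ in (-Real.pi)..Real.pi, ∫ k₂ in (-Real.pi)..Real.pi,
              ∫ k₃ in (-Real.pi)..Real.pi, neelIntegrand U tz TN k₁ k₂ k₃) := by
        rw [hneel]
        field_simp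
        rfl
      rw [one_mul] at h
      simp only [hIN₁def, hINdef, hNfdef, hN]
      exact h.symm
    have hGtot : (∫ k₁ in (-Real.pi)..Real.pi, IG₁ k₁) = (2 * Real.pi) ^ 3 := by
      have h : (1:ℝ) * (2 * Real.pi) ^ 3
          = (∫ k₁ in (-Real.pi)..Real.pi, ∫ k₂ in (-Real.pi)..Real.pi,
              ∫ k₃ in (-Real.pi)..Real.pi,
                U * thQ (Real.sqrt (Δ ^ 2 + bandE tz k₁ k₂ k₃ ^ 2)) (2 * T)
                  / (2 * Real.sqrt (Δ ^ 2 + bandE tz k₁ k₂ k₃ ^ 2))) := by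
        rw [hgap]
        field_simp
        rfl
      rw [one_mul] at h
      simp only [hIG₁def, hIGdef, hGfdef, hGdef]
      exact h.symm
    rw [hsplit₀, hNtot, hGtot] at hDpos
    simp at hDpos
end
end
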